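/- arXiv:1805.11376 — 2 statements merged into one kernel-verified Lean document; each statement's English description precedes it below -/
import Mathlib

section
/- Let n ≥ 3 and let α ∈ B_n, and let π = σ(α)^{-1} ∈ S_n. Then for all 1 ≤ i < j ≤ n and 1 ≤ r < s ≤ n, the element α·[A_{i,j}, A_{r,s}]·α^{-1}·[A_{π(i),π(j)}, A_{π(r),π(s)}]^{-1} belongs to Γ_3(P_n); that is, α·[A_{i,j}, A_{r,s}]·α^{-1} = [A_{π(i),π(j)}, A_{π(r),π(s)}] holds in P_n/Γ_3(P_n). -/
namespace BraidProj

/-- The commutation relator `σᵢσⱼσᵢ⁻¹σⱼ⁻¹` in the free group. -/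
def σrel1 {m : ℕ} (i j : Fin m) : FreeGroup (Fin m) :=
  .of i * .of j * (.of i)⁻¹ * (.of j)⁻¹

/-- The braid relator `σᵢσⱼσᵢ(σⱼσᵢσⱼ)⁻¹` in the free group. -/
def σrel2 {m : ℕ} (i j : Fin m) : FreeGroup (Fin m) :=
  .of i * .of j * .of i * (.of j * .of i * .of j)⁻¹

/-- The braid relations for the Artin braid group on `n` strings:
generators `σ_1, …, σ_{n-1}` are indexed (0-based) by `Fin (n-1)`. -/
def braidRels (n : ℕ) : Set (FreeGroup (Fin (n - 1))) :=
  {r | (∃ i j : Fin (n - 1), (i : ℕ) + 2 ≤ (j : ℕ) ∧ r = σrel1 i j) ∨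
       (∃ i j : Fin (n - 1), (i : ℕ) + 1 = (j : ℕ) ∧ r = σrel2 i j)}

/-- The Artin braid group `B_n` on `n` strings, as a presented group. -/
abbrev B (n : ℕ) : Type := PresentedGroup (braidRels n)

/-- The `i`-th Artin generator (0-based), with junk value `1` if out of range. -/
def braidGen (n : ℕ) (i : ℕ) : B n :=
  if h : i < n - 1 then PresentedGroup.of ⟨i, h⟩ else 1

/-- The transposition `(i, i+1)` (0-based) in `S_n`, the image of the Artin
generator `σ` indexed by `i : Fin (n-1)`. -/
def permGen (n : ℕ) (i : Fin (n - 1)) : Equiv.Perm (Fin n) :=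
  Equiv.swap ⟨(i : ℕ), by have := i.isLt; omega⟩ ⟨(i : ℕ) + 1, by have := i.isLt; omega⟩

lemma swap_commute_of {α : Type*} [DecidableEq α] {a b c d : α}
    (hac : a ≠ c) (had : a ≠ d) (hbc : b ≠ c) (hbd : b ≠ d) :
    Commute (Equiv.swap a b) (Equiv.swap c d) := by
  apply Equiv.Perm.Disjoint.commute
  intro x
  by_cases hxa : x = a
  · subst hxa; right; exact Equiv.swap_apply_of_ne_of_ne hac had
  by_cases hxb : x = b
  · subst hxb; right; exact Equiv.swap_apply_of_ne_of_ne hbc hbd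
  · left; exact Equiv.swap_apply_of_ne_of_ne hxa hxb

lemma swap_braid {α : Type*} [DecidableEq α] {a b c : α}
    (hab : a ≠ b) (hbc : b ≠ c) (hac : a ≠ c) :
    Equiv.swap a b * Equiv.swap b c * Equiv.swap a b =
      Equiv.swap b c * Equiv.swap a b * Equiv.swap b c := by
  ext x
  simp only [Equiv.Perm.mul_apply]
  by_cases hxa : x = a
  · subst hxa
    simp [Equiv.swap_apply_left, Equiv.swap_apply_right,
      Equiv.swap_apply_of_ne_of_ne, hab, hbc, hac, hab.symm, hbc.symm, hac.symm]
  by_cases hxb : x = b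
  · subst hxb
    simp [Equiv.swap_apply_left, Equiv.swap_apply_right,
      Equiv.swap_apply_of_ne_of_ne, hab, hbc, hac, hab.symm, hbc.symm, hac.symm]
  by_cases hxc : x = c
  · subst hxc
    simp [Equiv.swap_apply_left, Equiv.swap_apply_right,
      Equiv.swap_apply_of_ne_of_ne, hab, hbc, hac, hab.symm, hbc.symm, hac.symm]
  · simp [Equiv.swap_apply_of_ne_of_ne, hxa, hxb, hxc]

lemma braidRels_hold (n : ℕ) :
    ∀ r ∈ braidRels n, FreeGroup.lift (permGen n) r = 1 := by
  rintro r (⟨i, j, hij, rfl⟩ | ⟨i, j, hij, rfl⟩) <;>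
    simp only [σrel1, σrel2, map_mul, map_inv, FreeGroup.lift_apply_of]
  · have hi := i.isLt
    have hj := j.isLt
    have hcomm : Commute (permGen n i) (permGen n j) := by
      apply swap_commute_of <;> · simp only [ne_eq, Fin.mk.injEq]; omega
    have : permGen n i * permGen n j * (permGen n i)⁻¹ * (permGen n j)⁻¹ = 1 := by
      rw [hcomm.eq]; group
    exact this
  · have hi := i.isLt
    have hj := j.isLt
    have h2 : permGen n j =
        Equiv.swap ⟨(i : ℕ) + 1, by omega⟩ ⟨(i : ℕ) + 2, by omega⟩ := by
      unfold permGen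
      congr 1 <;> · simp only [Fin.mk.injEq]; omega
    have h1 : permGen n i =
        Equiv.swap (⟨(i : ℕ), by omega⟩ : Fin n) ⟨(i : ℕ) + 1, by omega⟩ := rfl
    rw [h1, h2, mul_inv_eq_one]
    apply swap_braid <;> · simp only [ne_eq, Fin.mk.injEq]; omega

/-- The canonical projection `σ : B_n → S_n` sending `σᵢ` to the
transposition `(i, i+1)`. -/
def braidπ (n : ℕ) : B n →* Equiv.Perm (Fin n) :=
  PresentedGroup.toGroup (braidRels_hold n)

/-- The pure braid group `P_n`, the kernel of `σ : B_n → S_n`. -/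
def P (n : ℕ) : Subgroup (B n) := (braidπ n).ker

instance P_normal (n : ℕ) : (P n).Normal := MonoidHom.normal_ker _

/-- `Γ_k(P_n)`, the `k`-th term of the lower central series of the pure braid
group (with `Γ_1(P_n) = P_n`), viewed as a subgroup of `B_n`. -/
def gammaB (n k : ℕ) : Subgroup (B n) :=
  (Subgroup.lowerCentralSeries (⊤ : Subgroup (P n)) (k - 1)).map (P n).subtype

instance gammaB_normal (n k : ℕ) : (gammaB n k).Normal := by
  constructor
  rintro x ⟨y, hy, rfl⟩ g
  let f : P n →* P n := (MulAut.conjNormal g).toMonoidHom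
  have hmem : f y ∈ Subgroup.lowerCentralSeries (⊤ : Subgroup (P n)) (k - 1) :=
    Subgroup.lowerCentralSeries.map f (k - 1) (Subgroup.mem_map_of_mem f hy)
  refine ⟨f y, hmem, ?_⟩
  simp [f, MulAut.conjNormal_apply]

lemma gammaB_le_P (n k : ℕ) : gammaB n k ≤ P n := Subgroup.map_subtype_le _

/-- The homomorphism `σ̄ : B_n/Γ_k(P_n) → S_n` induced by `σ`. -/
def braidπbar (n k : ℕ) : B n ⧸ gammaB n k →* Equiv.Perm (Fin n) :=
  QuotientGroup.lift _ (braidπ n)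
    (fun x hx => MonoidHom.mem_ker.mp (gammaB_le_P n k hx))

/-- The word `σ_{j-1} ⋯ σ_{i+1}` (paper 1-based indices). -/
def braidChain (n i j : ℕ) : B n :=
  ((List.range (j - 1 - i)).map (fun t => braidGen n (j - 2 - t))).prod

/-- The standard pure braid generator `A_{i,j} = σ_{j-1}⋯σ_{i+1} σ_i² σ_{i+1}⁻¹⋯σ_{j-1}⁻¹`
(paper 1-based indices, `1 ≤ i < j ≤ n`). -/
def braidA (n i j : ℕ) : B n :=
  braidChain n i j * (braidGen n (i - 1)) ^ 2 * (braidChain n i j)⁻¹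

/-- `A_{i,j}` with the convention `A_{j,i} = A_{i,j}`. -/
def braidAsym (n i j : ℕ) : B n := if i ≤ j then braidA n i j else braidA n j i

end BraidProj

namespace BraidProj

variable {n : ℕ}

lemma mk_rel {r : FreeGroup (Fin (n - 1))} (hr : r ∈ braidRels n) :
    PresentedGroup.mk (braidRels n) r = 1 := by
  have : r ∈ Subgroup.normalClosure (braidRels n) := Subgroup.subset_normalClosure hr
  exact (QuotientGroup.eq_one_iff r).mpr this

lemma of_comm (i j : Fin (n - 1)) (h : (i : ℕ) + 2 ≤ (j : ℕ)) :
    Commute (PresentedGroup.of i : B n) (PresentedGroup.of j) := by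
  have h1 : PresentedGroup.mk (braidRels n) (σrel1 i j) = 1 :=
    mk_rel (Or.inl ⟨i, j, h, rfl⟩)
  have key : (PresentedGroup.of i : B n) * .of j * ((PresentedGroup.of j : B n) * .of i)⁻¹ = 1 := by
    simp only [σrel1, map_mul, map_inv] at h1
    rw [mul_inv_rev]
    simpa [mul_assoc, PresentedGroup.of] using h1
  exact (commute_iff_eq _ _).mpr (mul_inv_eq_one.mp key)

lemma of_braid (i j : Fin (n - 1)) (h : (i : ℕ) + 1 = (j : ℕ)) :
    (PresentedGroup.of i : B n) * .of j * .of i = .of j * .of i * .of j := by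
  have h1 : PresentedGroup.mk (braidRels n) (σrel2 i j) = 1 :=
    mk_rel (Or.inr ⟨i, j, h, rfl⟩)
  have : (PresentedGroup.of i : B n) * .of j * .of i *
      ((PresentedGroup.of j : B n) * .of i * .of j)⁻¹ = 1 := by
    simpa [σrel2, PresentedGroup.of, map_mul, map_inv, mul_assoc] using h1
  exact mul_inv_eq_one.mp (by simpa [mul_assoc] using this)

lemma braidGen_of (a : ℕ) (ha : a < n - 1) :
    braidGen n a = PresentedGroup.of ⟨a, ha⟩ := by simp [braidGen, ha]

lemma gen_comm {a b : ℕ} (h : a + 2 ≤ b) : Commute (braidGen n a) (braidGen n b) := by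
  by_cases hb : b < n - 1
  · have ha : a < n - 1 := by omega
    rw [braidGen_of a ha, braidGen_of b hb]
    exact of_comm _ _ h
  · have : braidGen n b = 1 := by rw [braidGen, dif_neg hb]
    rw [this]; exact Commute.one_right _

lemma gen_comm' {a b : ℕ} (h : a + 2 ≤ b ∨ b + 2 ≤ a) :
    Commute (braidGen n a) (braidGen n b) := by
  rcases h with h | h
  · exact gen_comm h
  · exact (gen_comm h).symm

lemma gen_braid {a : ℕ} (h : a + 2 ≤ n - 1) :
    braidGen n a * braidGen n (a + 1) * braidGen n a =
      braidGen n (a + 1) * braidGen n a * braidGen n (a + 1) := by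
  have ha : a < n - 1 := by omega
  have ha1 : a + 1 < n - 1 := by omega
  rw [braidGen_of a ha, braidGen_of (a + 1) ha1]
  exact of_braid _ _ rfl

end BraidProj
namespace BraidProj
variable {n : ℕ}

lemma π_gen (a : ℕ) (ha : a < n - 1) :
    braidπ n (braidGen n a) = permGen n ⟨a, ha⟩ := by
  rw [braidGen_of a ha]
  exact PresentedGroup.toGroup.of _

lemma π_gen_sq (a : ℕ) : braidπ n (braidGen n a ^ 2) = 1 := by
  by_cases ha : a < n - 1
  · rw [map_pow, π_gen a ha, permGen, sq, Equiv.swap_mul_self]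
  · rw [braidGen, dif_neg ha]; simp

lemma π_A (p q : ℕ) : braidπ n (braidA n p q) = 1 := by
  rw [braidA, map_mul, map_mul, map_inv, π_gen_sq]
  group

lemma π_Asym (p q : ℕ) : braidπ n (braidAsym n p q) = 1 := by
  rw [braidAsym]; split <;> exact π_A _ _

lemma asym_comm (p q : ℕ) : braidAsym n p q = braidAsym n q p := by
  rcases Nat.lt_trichotomy p q with h | rfl | h
  · rw [braidAsym, braidAsym, if_pos h.le, if_neg (by omega)]
  · rfl
  · rw [braidAsym, braidAsym, if_neg (by omega), if_pos h.le]

lemma asym_of_le {p q : ℕ} (h : p ≤ q) : braidAsym n p q = braidA n p q := if_pos h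

/-! Chains. Letters of `braidChain n p q` are `braidGen n t` for `p ≤ t ≤ q - 2`. -/

lemma chain_stop {p q : ℕ} (h : q ≤ p + 1) : braidChain n p q = 1 := by
  rw [braidChain]
  have : q - 1 - p = 0 := by omega
  rw [this]
  simp

lemma chain_top {p q : ℕ} (h : p < q) : braidChain n p (q + 1) = braidGen n (q - 1) * braidChain n p q := by
  rw [braidChain, braidChain]
  have h1 : q + 1 - 1 - p = (q - 1 - p) + 1 := by omega
  rw [h1, List.range_succ_eq_map, List.map_cons, List.prod_cons, List.map_map]
  have e1 : braidGen n (q + 1 - 2 - 0) = braidGen n (q - 1) := by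
    congr 1
  have e2 : List.map ((fun t => braidGen n (q + 1 - 2 - t)) ∘ Nat.succ) (List.range (q - 1 - p)) =
      List.map (fun t => braidGen n (q - 2 - t)) (List.range (q - 1 - p)) := by
    apply List.map_congr_left
    intro t ht
    have ht' : t < q - 1 - p := List.mem_range.mp ht
    simp only [Function.comp_apply]
    congr 1
    omega
  rw [e1, e2]

lemma chain_bot {p q : ℕ} (h : p + 1 < q) :
    braidChain n p q = braidChain n (p + 1) q * braidGen n p := by
  rw [braidChain, braidChain]
  have h1 : q - 1 - p = (q - 1 - (p + 1)) + 1 := by omega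
  rw [h1, List.range_succ, List.map_append, List.prod_append]
  congr 1
  simp only [List.map_cons, List.map_nil, List.prod_cons, List.prod_nil, mul_one]
  congr 1
  omega

lemma chain_split {p m q : ℕ} (hp : p < m) (hq : m < q) :
    braidChain n p q = braidChain n m q * braidGen n (m - 1) * braidChain n p m := by
  induction q, hq using Nat.le_induction with
  | base =>
    rw [chain_top hp, chain_stop (le_refl (m + 1)), one_mul]
  | succ q hq ih =>
    rw [chain_top (by omega : p < q), ih, chain_top (by omega : m < q)]
    group

lemma chain_commute {x : B n} {p q : ℕ}
    (h : ∀ t, p ≤ t → t + 2 ≤ q → Commute x (braidGen n t)) :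
    Commute x (braidChain n p q) := by
  rw [braidChain]
  apply Commute.list_prod_right
  intro y hy
  simp only [List.mem_map, List.mem_range] at hy
  obtain ⟨t, ht, rfl⟩ := hy
  exact h _ (by omega) (by omega)

lemma gen_chain_lo {a p q : ℕ} (h : a + 1 < p) :
    Commute (braidGen n a) (braidChain n p q) :=
  chain_commute fun t ht _ => gen_comm (by omega)

lemma gen_chain_hi {a p q : ℕ} (h : q ≤ a) :
    Commute (braidGen n a) (braidChain n p q) :=
  chain_commute fun t _ ht => (gen_comm (by omega)).symm

end BraidProj
namespace BraidProj
variable {n : ℕ}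

/-- `C0 n i j` : the chain for 0-based strings `i < j`. Letters are
`braidGen n t` for `i + 1 ≤ t ≤ j - 1`. -/
def C0 (n i j : ℕ) : B n := braidChain n (i + 1) (j + 1)

/-- `A0 n i j` : the pure braid generator for 0-based strings `i < j`. -/
def A0 (n i j : ℕ) : B n := braidA n (i + 1) (j + 1)

lemma A0_def (i j : ℕ) : A0 n i j = C0 n i j * braidGen n i ^ 2 * (C0 n i j)⁻¹ := by
  simp [A0, C0, braidA]

lemma π_A0 (i j : ℕ) : braidπ n (A0 n i j) = 1 := π_A _ _

lemma C0_stop {i j : ℕ} (h : j ≤ i + 1) : C0 n i j = 1 := chain_stop (by omega)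

lemma C0_top {i j : ℕ} (h : i < j) : C0 n i (j + 1) = braidGen n j * C0 n i j := by
  have := chain_top (n := n) (p := i + 1) (q := j + 1) (by omega)
  simpa [C0] using this

lemma C0_bot {i j : ℕ} (h : i + 1 < j) : C0 n i j = C0 n (i + 1) j * braidGen n (i + 1) := by
  have := chain_bot (n := n) (p := i + 1) (q := j + 1) (by omega)
  simpa [C0] using this

lemma C0_split {i m j : ℕ} (h1 : i < m) (h2 : m < j) :
    C0 n i j = C0 n m j * braidGen n m * C0 n i m := by
  have := chain_split (n := n) (p := i + 1) (m := m + 1) (q := j + 1) (by omega) (by omega)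
  simpa [C0] using this

lemma gC0_lo {a i j : ℕ} (h : a < i) : Commute (braidGen n a) (C0 n i j) :=
  gen_chain_lo (by omega)

lemma gC0_hi {a i j : ℕ} (h : j + 1 ≤ a) : Commute (braidGen n a) (C0 n i j) :=
  gen_chain_hi (by omega)

lemma comm_conj {G : Type*} [Group G] {g m : G} (h : Commute g m) :
    g * m * g⁻¹ = m := by rw [h.eq]; group

lemma pack1 {G : Type*} [Group G] (C u v : G) :
    C * (u * v * u⁻¹) * C⁻¹ = (C * u * C⁻¹) * (C * v * C⁻¹) * (C * u * C⁻¹)⁻¹ := by group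

lemma pack2 {G : Type*} [Group G] (g A : G) :
    g * (g * A * g⁻¹) * g⁻¹ = g ^ 2 * A * (g ^ 2)⁻¹ := by
  simp [pow_two, mul_inv_rev, mul_assoc]

lemma pack3 {G : Type*} [Group G] (x y : G) :
    x ^ 2 * (x⁻¹ * y ^ 2 * x) * (x ^ 2)⁻¹ = x * y ^ 2 * x⁻¹ := by
  simp [pow_two, mul_inv_rev, mul_assoc]

lemma conj_aux {G : Type*} [Group G] {g C m m' : G} (hcomm : Commute g C)
    (hm : g * m * g⁻¹ = m') :
    g * (C * m * C⁻¹) * g⁻¹ = C * m' * C⁻¹ := by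
  rw [← hm]
  calc g * (C * m * C⁻¹) * g⁻¹ = (g * C) * m * (g * C)⁻¹ := by group
    _ = (C * g) * m * (C * g)⁻¹ := by rw [hcomm.eq]
    _ = C * (g * m * g⁻¹) * C⁻¹ := by group

lemma braid_aux {G : Type*} [Group G] {x y : G} (h : x * y * x = y * x * y) :
    y * x ^ 2 * y⁻¹ = x⁻¹ * y ^ 2 * x := by
  have h1 : y * x * y⁻¹ = x⁻¹ * y * x := by
    calc y * x * y⁻¹ = x⁻¹ * (x * y * x) * y⁻¹ := by group
      _ = x⁻¹ * (y * x * y) * y⁻¹ := by rw [h]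
      _ = x⁻¹ * y * x := by group
  calc y * x ^ 2 * y⁻¹ = (y * x * y⁻¹) * (y * x * y⁻¹) := by rw [pow_two]; group
    _ = (x⁻¹ * y * x) * (x⁻¹ * y * x) := by rw [h1]
    _ = x⁻¹ * y ^ 2 * x := by rw [pow_two]; group

/-! The conjugation cases for `braidGen n a * A0 n i j * (braidGen n a)⁻¹`. -/

lemma case1 {a i j : ℕ} (h : a + 2 ≤ i) : Commute (braidGen n a) (A0 n i j) := by
  rw [A0_def]
  exact ((gC0_lo (by omega)).mul_right
    ((gen_comm (by omega)).pow_right 2)).mul_right (gC0_lo (by omega)).inv_right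

lemma case8 {a i j : ℕ} (hij : i < j) (h : j + 1 ≤ a) :
    Commute (braidGen n a) (A0 n i j) := by
  rw [A0_def]
  exact ((gC0_hi (by omega)).mul_right
    (((gen_comm (show i + 2 ≤ a by omega)).symm).pow_right 2)).mul_right
    (gC0_hi (by omega)).inv_right

lemma case3 (i : ℕ) : A0 n i (i + 1) = braidGen n i ^ 2 := by
  rw [A0_def, C0_stop (le_refl _)]
  simp

lemma case7 {i j : ℕ} (hij : i < j) :
    braidGen n j * A0 n i j * (braidGen n j)⁻¹ = A0 n i (j + 1) := by
  rw [A0_def, A0_def, C0_top hij]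
  group

lemma case6 {i j : ℕ} (hij : i < j) :
    braidGen n j * A0 n i (j + 1) * (braidGen n j)⁻¹ =
      braidGen n j ^ 2 * A0 n i j * (braidGen n j ^ 2)⁻¹ := by
  rw [← case7 hij, pack2]

lemma case4 {i j : ℕ} (h : i + 1 < j) (hj : j ≤ n - 1) :
    braidGen n i * A0 n i j * (braidGen n i)⁻¹ = A0 n (i + 1) j := by
  have hb := gen_braid (show i + 2 ≤ n - 1 by omega)
  have h1 := braid_aux hb
  have key : braidGen n i * (braidGen n (i + 1) * braidGen n i ^ 2 * (braidGen n (i + 1))⁻¹) *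
      (braidGen n i)⁻¹ = braidGen n (i + 1) ^ 2 := by
    rw [h1]; group
  have hcomm : Commute (braidGen n i) (C0 n (i + 1) j) := gC0_lo (by omega)
  rw [A0_def, A0_def, C0_bot h]
  have e : C0 n (i + 1) j * braidGen n (i + 1) * braidGen n i ^ 2 *
      (C0 n (i + 1) j * braidGen n (i + 1))⁻¹ =
      C0 n (i + 1) j * (braidGen n (i + 1) * braidGen n i ^ 2 * (braidGen n (i + 1))⁻¹) *
        (C0 n (i + 1) j)⁻¹ := by group
  rw [e, conj_aux hcomm key]

lemma case2 {i j : ℕ} (h : i + 1 < j) (hj : j ≤ n - 1) :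
    ∃ w : B n, braidπ n w = 1 ∧
      braidGen n i * A0 n (i + 1) j * (braidGen n i)⁻¹ = w * A0 n i j * w⁻¹ := by
  set x := braidGen n i with hx
  set y := braidGen n (i + 1) with hy
  set C := C0 n (i + 1) j with hC
  refine ⟨C * x ^ 2 * C⁻¹, ?_, ?_⟩
  · rw [map_mul, map_mul, map_inv, π_gen_sq]; group
  · have hb := gen_braid (show i + 2 ≤ n - 1 by omega)
    have h1 := braid_aux hb
    have hcomm : Commute x (C0 n (i + 1) j) := gC0_lo (by omega)
    have key : x * y ^ 2 * x⁻¹ = x ^ 2 * (y * x ^ 2 * y⁻¹) * (x ^ 2)⁻¹ := by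
      rw [h1, pack3]
    have hA1 : A0 n (i + 1) j = C * y ^ 2 * C⁻¹ := A0_def _ _
    have hA2 : A0 n i j = C * (y * x ^ 2 * y⁻¹) * C⁻¹ := by
      rw [A0_def, C0_bot h, ← hC, ← hx, ← hy]
      group
    rw [hA1, hA2, conj_aux hcomm key, pack1]

lemma case5 {a i j : ℕ} (h1 : i < a) (h2 : a + 1 < j) (hj : j ≤ n - 1) :
    Commute (braidGen n a) (A0 n i j) := by
  set y := braidGen n a with hy
  set z := braidGen n (a + 1) with hz
  set U := C0 n (a + 1) j with hU
  set m := A0 n i a with hm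
  have hb : y * z * y = z * y * z := gen_braid (show a + 2 ≤ n - 1 by omega)
  have hyU : Commute y U := gC0_lo (by omega)
  have hzm : Commute z m := by
    rw [hm]
    exact case8 h1 (le_refl _)
  have hA : A0 n i j = U * (z * y * m * y⁻¹ * z⁻¹) * U⁻¹ := by
    rw [A0_def, C0_split (show i < a + 1 by omega) h2, C0_top h1, hm, A0_def, ← hU, ← hy, ← hz]
    group
  have inner : y * (z * y * m * y⁻¹ * z⁻¹) * y⁻¹ = z * y * m * y⁻¹ * z⁻¹ := by
    calc y * (z * y * m * y⁻¹ * z⁻¹) * y⁻¹ = (y * z * y) * m * (y * z * y)⁻¹ := by group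
      _ = (z * y * z) * m * (z * y * z)⁻¹ := by rw [hb]
      _ = z * y * (z * m * z⁻¹) * y⁻¹ * z⁻¹ := by group
      _ = z * y * m * y⁻¹ * z⁻¹ := by rw [comm_conj hzm]
  have key : y * A0 n i j * y⁻¹ = A0 n i j := by
    rw [hA, conj_aux hyU inner]
  rw [commute_iff_eq]
  calc y * A0 n i j = (y * A0 n i j * y⁻¹) * y := by group
    _ = A0 n i j * y := by rw [key]

end BraidProj
namespace BraidProj
variable {n : ℕ}

/-- the transposition `(a, a+1)` as a function on naturals. -/
def sw (a t : ℕ) : ℕ := if t = a then a + 1 else if t = a + 1 then a else t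

lemma pack4 {G : Type*} [Group G] (g : G) : g * g ^ 2 * g⁻¹ = g ^ 2 := by
  simp [pow_two, mul_assoc]

lemma asym0 {p q : ℕ} (h : p ≤ q) : braidAsym n (p + 1) (q + 1) = A0 n p q :=
  asym_of_le (by omega)

lemma gen_conj_sorted {a i j : ℕ} (ha : a < n - 1) (hij : i < j) (hj : j < n) :
    ∃ w : B n, braidπ n w = 1 ∧
      braidGen n a * A0 n i j * (braidGen n a)⁻¹ =
        w * braidAsym n (sw a i + 1) (sw a j + 1) * w⁻¹ := by
  have hsw : ∀ t : ℕ, t ≠ a → t ≠ a + 1 → sw a t = t := by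
    intro t h1 h2; unfold sw; split_ifs <;> omega
  have hswa : sw a a = a + 1 := by unfold sw; split_ifs <;> omega
  have hswa1 : sw a (a + 1) = a := by unfold sw; split_ifs <;> omega
  by_cases h1 : a + 2 ≤ i
  · refine ⟨1, map_one _, ?_⟩
    rw [hsw i (by omega) (by omega), hsw j (by omega) (by omega), asym0 hij.le,
      one_mul, inv_one, mul_one, comm_conj (case1 h1)]
  by_cases h2 : a + 1 = i
  · obtain ⟨w, hw, he⟩ := case2 (n := n) (i := a) (j := j) (by omega) (by omega)
    refine ⟨w, hw, ?_⟩
    rw [hsw j (by omega) (by omega), ← h2, hswa1, asym0 (by omega)]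
    exact he
  by_cases h3 : a = i
  · subst h3
    by_cases h4 : j = a + 1
    · subst h4
      refine ⟨1, map_one _, ?_⟩
      rw [hswa, hswa1, asym_comm, asym0 (by omega), one_mul, inv_one, mul_one,
        case3, pack4]
    · refine ⟨1, map_one _, ?_⟩
      rw [hswa, hsw j (by omega) (by omega), asym0 (by omega), one_mul, inv_one, mul_one]
      exact case4 (by omega) (by omega)
  -- now i < a
  have hia : i < a := by omega
  by_cases h5 : a + 1 < j
  · refine ⟨1, map_one _, ?_⟩
    rw [hsw i (by omega) (by omega), hsw j (by omega) (by omega), asym0 hij.le,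
      one_mul, inv_one, mul_one, comm_conj (case5 hia h5 (by omega))]
  by_cases h6 : a + 1 = j
  · refine ⟨braidGen n a ^ 2, π_gen_sq a, ?_⟩
    rw [hsw i (by omega) (by omega), ← h6, hswa1, asym0 (by omega)]
    exact case6 hia
  by_cases h7 : a = j
  · refine ⟨1, map_one _, ?_⟩
    rw [hsw i (by omega) (by omega), ← h7, hswa, asym0 (by omega), one_mul, inv_one,
      mul_one]
    exact case7 (by omega)
  · refine ⟨1, map_one _, ?_⟩
    rw [hsw i (by omega) (by omega), hsw j (by omega) (by omega), asym0 hij.le,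
      one_mul, inv_one, mul_one, comm_conj (case8 hij (by omega))]

lemma sw_coe {a : ℕ} (ha : a < n - 1) (t : Fin n) :
    ((permGen n ⟨a, ha⟩ t : Fin n) : ℕ) = sw a (t : ℕ) := by
  unfold permGen sw
  rw [Equiv.swap_apply_def]
  rcases t with ⟨t, ht⟩
  simp only [Fin.ext_iff]
  split_ifs <;> simp_all <;> omega

end BraidProj
namespace BraidProj
variable {n : ℕ}

lemma packMul {G : Type*} [Group G] {x w1 w2 A' A'' : G}
    (e2 : x * A' * x⁻¹ = w2 * A'' * w2⁻¹) :
    x * (w1 * A' * w1⁻¹) * x⁻¹ = (x * w1 * x⁻¹ * w2) * A'' * (x * w1 * x⁻¹ * w2)⁻¹ := by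
  calc x * (w1 * A' * w1⁻¹) * x⁻¹
      = (x * w1 * x⁻¹) * (x * A' * x⁻¹) * (x * w1 * x⁻¹)⁻¹ := by group
    _ = (x * w1 * x⁻¹) * (w2 * A'' * w2⁻¹) * (x * w1 * x⁻¹)⁻¹ := by rw [e2]
    _ = (x * w1 * x⁻¹ * w2) * A'' * (x * w1 * x⁻¹ * w2)⁻¹ := by group

lemma packInv {G : Type*} [Group G] {x w A A' : G}
    (e : x * A' * x⁻¹ = w * A * w⁻¹) :
    x⁻¹ * A * x = (x⁻¹ * w⁻¹ * x) * A' * (x⁻¹ * w⁻¹ * x)⁻¹ := by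
  have hA : A = w⁻¹ * (x * A' * x⁻¹) * w := by rw [e]; group
  rw [hA]; group

/-- conjugation sends `A_{i,j}` to a pure-conjugate of `A_{π i, π j}`. -/
lemma conj_A (α : B n) : ∀ i j : Fin n, i ≠ j →
    ∃ w : B n, braidπ n w = 1 ∧
      α * braidAsym n ((i : ℕ) + 1) ((j : ℕ) + 1) * α⁻¹ =
        w * braidAsym n ((braidπ n α i : ℕ) + 1) ((braidπ n α j : ℕ) + 1) * w⁻¹ := by
  have hmem : α ∈ Subgroup.closure (Set.range (PresentedGroup.of : Fin (n - 1) → B n)) := by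
    rw [PresentedGroup.closure_range_of]; trivial
  refine Subgroup.closure_induction
    (p := fun β _ => ∀ i j : Fin n, i ≠ j →
      ∃ w : B n, braidπ n w = 1 ∧
        β * braidAsym n ((i : ℕ) + 1) ((j : ℕ) + 1) * β⁻¹ =
          w * braidAsym n ((braidπ n β i : ℕ) + 1) ((braidπ n β j : ℕ) + 1) * w⁻¹)
    ?_ ?_ ?_ ?_ hmem
  · -- generators
    rintro _ ⟨k, rfl⟩ i j hij
    have hk : (PresentedGroup.of k : B n) = braidGen n (k : ℕ) := by
      rw [braidGen_of _ k.isLt]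
    have hπ : braidπ n (PresentedGroup.of k : B n) = permGen n k := by
      exact PresentedGroup.toGroup.of _
    have hkk : permGen n k = permGen n ⟨(k : ℕ), k.isLt⟩ := by congr
    rcases Ne.lt_or_gt hij with hlt | hlt
    · obtain ⟨w, hw, he⟩ :=
        gen_conj_sorted (n := n) (a := (k : ℕ)) (i := (i : ℕ)) (j := (j : ℕ))
          k.isLt hlt j.isLt
      refine ⟨w, hw, ?_⟩
      rw [hπ, hkk, sw_coe, sw_coe, hk, asym0 (le_of_lt hlt)]
      exact he
    · obtain ⟨w, hw, he⟩ :=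
        gen_conj_sorted (n := n) (a := (k : ℕ)) (i := (j : ℕ)) (j := (i : ℕ))
          k.isLt hlt i.isLt
      refine ⟨w, hw, ?_⟩
      rw [hπ, hkk, sw_coe, sw_coe, hk, asym_comm, asym0 (le_of_lt hlt),
        asym_comm (sw (k : ℕ) (i : ℕ) + 1)]
      exact he
  · -- one
    intro i j hij
    refine ⟨1, map_one _, ?_⟩
    simp
  · -- mul
    intro x y _ _ hx hy i j hij
    obtain ⟨w1, hw1, e1⟩ := hy i j hij
    obtain ⟨w2, hw2, e2⟩ := hx (braidπ n y i) (braidπ n y j)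
      (fun h => hij ((braidπ n y).injective h))
    refine ⟨x * w1 * x⁻¹ * w2, ?_, ?_⟩
    · simp [map_mul, map_inv, hw1, hw2]
    · have : (x * y) * braidAsym n ((i : ℕ) + 1) ((j : ℕ) + 1) * (x * y)⁻¹ =
          x * (y * braidAsym n ((i : ℕ) + 1) ((j : ℕ) + 1) * y⁻¹) * x⁻¹ := by group
      rw [this, e1, packMul e2]
      congr 2 <;> simp [map_mul, Equiv.Perm.mul_apply]
  · -- inv
    intro x _ hx i j hij
    have hinj : Function.Injective ⇑((braidπ n x)⁻¹) := Equiv.injective _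
    obtain ⟨w, hw, e⟩ := hx ((braidπ n x)⁻¹ i) ((braidπ n x)⁻¹ j)
      (fun h => hij (hinj h))
    simp only [← Equiv.Perm.mul_apply, mul_inv_cancel, Equiv.Perm.one_apply] at e
    refine ⟨x⁻¹ * w⁻¹ * x, ?_, ?_⟩
    · simp [map_mul, map_inv, hw]
    · rw [inv_inv, packInv e]
      congr 2 <;> simp [map_inv]
      <;> rfl

end BraidProj
namespace BraidProj

open scoped commutatorElement

lemma comm_central {H : Type*} [Group H] {c d u v : H}
    (hc : ∀ z, c * z = z * c) (hd : ∀ z, d * z = z * d) :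
    ⁅c * u, d * v⁆ = ⁅u, v⁆ := by
  have hcC : ∀ z, Commute c z := fun z => hc z
  have hdC : ∀ z, Commute d z := fun z => hd z
  have step1 : ⁅c * u, d * v⁆ = ⁅u, d * v⁆ := by
    have hC : Commute c (u * (d * v) * u⁻¹) := hcC _
    calc ⁅c * u, d * v⁆ = c * (u * (d * v) * u⁻¹) * c⁻¹ * (d * v)⁻¹ := by
          rw [commutatorElement_def]; group
      _ = c * (c⁻¹ * (u * (d * v) * u⁻¹)) * (d * v)⁻¹ := by
          rw [mul_assoc c (u * (d * v) * u⁻¹) c⁻¹, ← hC.inv_left.eq]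
      _ = ⁅u, d * v⁆ := by rw [commutatorElement_def]; group
  have step2 : ⁅u, d * v⁆ = ⁅u, v⁆ := by
    have hC : Commute d (u * v * u⁻¹ * v⁻¹) := hdC _
    have hC2 : Commute d u := hdC u
    calc ⁅u, d * v⁆ = u * d * v * u⁻¹ * (d * v)⁻¹ := by
          rw [commutatorElement_def]; group
      _ = u * d * v * u⁻¹ * v⁻¹ * d⁻¹ := by group
      _ = d * (u * v * u⁻¹ * v⁻¹) * d⁻¹ := by
          rw [← hC2.eq]; group
      _ = ⁅u, v⁆ := by rw [comm_conj hC, commutatorElement_def]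
  rw [step1, step2]

lemma comm_congr {G : Type*} [Group G] {x x' y y' : G}
    (hx : x * x'⁻¹ ∈ Subgroup.lowerCentralSeries (⊤ : Subgroup G) 1) (hy : y * y'⁻¹ ∈ Subgroup.lowerCentralSeries (⊤ : Subgroup G) 1) :
    ⁅x, y⁆ * ⁅x', y'⁆⁻¹ ∈ Subgroup.lowerCentralSeries (⊤ : Subgroup G) 2 := by
  set N := Subgroup.lowerCentralSeries (⊤ : Subgroup G) 2 with hN
  have hnormal : N.Normal := Subgroup.lowerCentralSeries_normal ⊤ 2
  rw [← div_eq_mul_inv, ← QuotientGroup.eq_iff_div_mem]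
  have hcen : ∀ c : G, c ∈ Subgroup.lowerCentralSeries (⊤ : Subgroup G) 1 →
      ∀ q : G ⧸ N, ((c : G ⧸ N) * q = q * (c : G ⧸ N)) := by
    intro c hcm q
    induction q using QuotientGroup.induction_on with
    | H z =>
      have hmem : ⁅c, z⁆ ∈ N := by
        rw [hN, show (2 : ℕ) = 1 + 1 from rfl, Subgroup.lowerCentralSeries_succ]
        exact Subgroup.commutator_mem_commutator hcm (Subgroup.mem_top z)
      have h1 : ((⁅c, z⁆ : G) : G ⧸ N) = 1 := (QuotientGroup.eq_one_iff _).mpr hmem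
      rw [commutatorElement_def] at h1
      simp only [QuotientGroup.mk_mul, QuotientGroup.mk_inv] at h1
      have h2 := mul_inv_eq_one.mp h1
      calc (c : G ⧸ N) * (z : G ⧸ N) = ((c : G ⧸ N) * z * (c : G ⧸ N)⁻¹) * c := by group
        _ = (z : G ⧸ N) * (c : G ⧸ N) := by rw [h2]
  show (QuotientGroup.mk' N) ⁅x, y⁆ = (QuotientGroup.mk' N) ⁅x', y'⁆
  have fx : (QuotientGroup.mk' N) x =
      (QuotientGroup.mk' N) (x * x'⁻¹) * (QuotientGroup.mk' N) x' := by
    rw [← map_mul]; congr 1; group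
  have fy : (QuotientGroup.mk' N) y =
      (QuotientGroup.mk' N) (y * y'⁻¹) * (QuotientGroup.mk' N) y' := by
    rw [← map_mul]; congr 1; group
  rw [map_commutatorElement, map_commutatorElement, fx, fy]
  exact comm_central (hcen _ hx) (hcen _ hy)

end BraidProj

namespace BraidProj

open scoped commutatorElement

lemma packC {G : Type*} [Group G] (a u u' : G) :
    a * ⁅u, u'⁆ * a⁻¹ = ⁅a * u * a⁻¹, a * u' * a⁻¹⁆ := by
  rw [commutatorElement_def, commutatorElement_def]; group

end BraidProj

open scoped commutatorElement in
open BraidProj in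
/-- For `α ∈ B_n` with `π = σ(α)⁻¹`, conjugation by `α` sends the commutator
`[A_{i,j}, A_{r,s}]` to `[A_{π(i),π(j)}, A_{π(r),π(s)}]` modulo `Γ_3(P_n)`.
Indices of strings are `0`-based (`i : Fin n` is the string `i+1` of the
paper).  Note: the paper multiplies permutations left-to-right
(`(α·β)(i) = β(α(i))`), whereas Mathlib's `Equiv.Perm` composes functions
right-to-left; consequently the permutation `σ(α)⁻¹` of the paper, viewed as
a function on the strings, is exactly the function `braidπ n α` below. -/
theorem conjugation_of_commutator (n : ℕ) (hn : 3 ≤ n) (α : B n)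
    (π : Equiv.Perm (Fin n)) (hπ : π = braidπ n α)
    (i j r s : Fin n) (hij : i < j) (hrs : r < s) :
    α * ⁅braidA n ((i : ℕ) + 1) ((j : ℕ) + 1),
          braidA n ((r : ℕ) + 1) ((s : ℕ) + 1)⁆ * α⁻¹ *
      (⁅braidAsym n ((π i : ℕ) + 1) ((π j : ℕ) + 1),
          braidAsym n ((π r : ℕ) + 1) ((π s : ℕ) + 1)⁆)⁻¹ ∈ gammaB n 3 := by
  subst hπ
  obtain ⟨w, hw, ew⟩ := conj_A α i j (ne_of_lt hij)
  obtain ⟨v, hv, ev⟩ := conj_A α r s (ne_of_lt hrs)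
  rw [asym_of_le (Nat.succ_le_succ (Fin.lt_def.mp hij).le)] at ew
  rw [asym_of_le (Nat.succ_le_succ (Fin.lt_def.mp hrs).le)] at ev
  set X := braidA n ((i : ℕ) + 1) ((j : ℕ) + 1) with hX
  set Y := braidA n ((r : ℕ) + 1) ((s : ℕ) + 1) with hY
  set X' := braidAsym n ((braidπ n α i : ℕ) + 1) ((braidπ n α j : ℕ) + 1) with hX'
  set Y' := braidAsym n ((braidπ n α r : ℕ) + 1) ((braidπ n α s : ℕ) + 1) with hY'
  have hwP : w ∈ P n := MonoidHom.mem_ker.mpr hw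
  have hvP : v ∈ P n := MonoidHom.mem_ker.mpr hv
  have hX'P : X' ∈ P n := MonoidHom.mem_ker.mpr (π_Asym _ _)
  have hY'P : Y' ∈ P n := MonoidHom.mem_ker.mpr (π_Asym _ _)
  set wP : P n := ⟨w, hwP⟩ with hwPd
  set vP : P n := ⟨v, hvP⟩ with hvPd
  set XP : P n := ⟨X', hX'P⟩ with hXPd
  set YP : P n := ⟨Y', hY'P⟩ with hYPd
  have hx1 : (wP * XP * wP⁻¹) * XP⁻¹ ∈ Subgroup.lowerCentralSeries (⊤ : Subgroup (P n)) 1 := by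
    have he : (wP * XP * wP⁻¹) * XP⁻¹ = ⁅wP, XP⁆ := by
      rw [commutatorElement_def]
    rw [he, Subgroup.top_lowerCentralSeries_one, commutator_def]
    exact Subgroup.commutator_mem_commutator (Subgroup.mem_top _) (Subgroup.mem_top _)
  have hy1 : (vP * YP * vP⁻¹) * YP⁻¹ ∈ Subgroup.lowerCentralSeries (⊤ : Subgroup (P n)) 1 := by
    have he : (vP * YP * vP⁻¹) * YP⁻¹ = ⁅vP, YP⁆ := by
      rw [commutatorElement_def]
    rw [he, Subgroup.top_lowerCentralSeries_one, commutator_def]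
    exact Subgroup.commutator_mem_commutator (Subgroup.mem_top _) (Subgroup.mem_top _)
  have hmem := comm_congr hx1 hy1
  have hg : gammaB n 3 = Subgroup.map (P n).subtype (Subgroup.lowerCentralSeries (⊤ : Subgroup (P n)) 2) := rfl
  rw [hg]
  refine Subgroup.mem_map.mpr ⟨_, hmem, ?_⟩
  rw [map_mul, map_inv, map_commutatorElement, map_commutatorElement,
    map_mul, map_mul, map_inv, map_mul, map_mul, map_inv]
  simp only [Subgroup.coe_subtype, hwPd, hvPd, hXPd, hYPd]
  rw [packC α X Y, ew, ev]
end

section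
/- Let n ≥ 4. For α ∈ B_n, the following are equivalent: (i) α ∈ P_n; (ii) for every g ∈ Γ_2(P_n), the commutator [α, g] = αgα^{-1}g^{-1} belongs to Γ_3(P_n). In other words, the conjugation action of B_n/Γ_3(P_n) on Γ_2(P_n)/Γ_3(P_n) factors through S_n, and the resulting action of S_n is faithful for n ≥ 4. -/
namespace BraidProj

open scoped commutatorElement

structure Tr where
  a : ℤ
  b : ℤ
  c : ℤ
  deriving DecidableEq

namespace Tr
@[ext] lemma ext' {x y : Tr} (h1 : x.a = y.a) (h2 : x.b = y.b) (h3 : x.c = y.c) : x = y := by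
  cases x; cases y; simp_all
instance : Zero Tr := ⟨⟨0,0,0⟩⟩
instance : One Tr := ⟨⟨1,0,0⟩⟩
instance : Add Tr := ⟨fun x y => ⟨x.a + y.a, x.b + y.b, x.c + y.c⟩⟩
instance : Neg Tr := ⟨fun x => ⟨-x.a, -x.b, -x.c⟩⟩
instance : Mul Tr := ⟨fun x y => ⟨x.a * y.a, x.a * y.b + x.b * y.a, x.a * y.c + x.b * y.b + x.c * y.a⟩⟩
@[simp] lemma zero_a : (0 : Tr).a = 0 := rfl
@[simp] lemma zero_b : (0 : Tr).b = 0 := rfl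
@[simp] lemma zero_c : (0 : Tr).c = 0 := rfl
@[simp] lemma one_a : (1 : Tr).a = 1 := rfl
@[simp] lemma one_b : (1 : Tr).b = 0 := rfl
@[simp] lemma one_c : (1 : Tr).c = 0 := rfl
@[simp] lemma add_a (x y : Tr) : (x + y).a = x.a + y.a := rfl
@[simp] lemma add_b (x y : Tr) : (x + y).b = x.b + y.b := rfl
@[simp] lemma add_c (x y : Tr) : (x + y).c = x.c + y.c := rfl
@[simp] lemma neg_a (x : Tr) : (-x).a = -x.a := rfl
@[simp] lemma neg_b (x : Tr) : (-x).b = -x.b := rfl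
@[simp] lemma neg_c (x : Tr) : (-x).c = -x.c := rfl
@[simp] lemma mul_a (x y : Tr) : (x * y).a = x.a * y.a := rfl
@[simp] lemma mul_b (x y : Tr) : (x * y).b = x.a * y.b + x.b * y.a := rfl
@[simp] lemma mul_c (x y : Tr) : (x * y).c = x.a * y.c + x.b * y.b + x.c * y.a := rfl
instance : CommRing Tr where
  add_assoc x y z := by ext <;> simp <;> ring
  zero_add x := by ext <;> simp
  add_zero x := by ext <;> simp
  add_comm x y := by ext <;> simp <;> ring
  neg_add_cancel x := by ext <;> simp
  mul_assoc x y z := by ext <;> simp <;> ring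
  one_mul x := by ext <;> simp
  mul_one x := by ext <;> simp
  left_distrib x y z := by ext <;> simp <;> ring
  right_distrib x y z := by ext <;> simp <;> ring
  mul_comm x y := by ext <;> simp <;> ring
  zero_mul x := by ext <;> simp
  mul_zero x := by ext <;> simp
  nsmul := nsmulRec
  zsmul := zsmulRec
def pra : Tr →+* ℤ where
  toFun x := x.a
  map_one' := rfl
  map_mul' _ _ := rfl
  map_zero' := rfl
  map_add' _ _ := rfl
def prb : Tr →+ ℤ where
  toFun x := x.b
  map_zero' := rfl
  map_add' _ _ := rfl
def prc : Tr →+ ℤ where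
  toFun x := x.c
  map_zero' := rfl
  map_add' _ _ := rfl
end Tr

/-! ### Component matrices -/

variable {N : ℕ}

def cc0 (M : Matrix (Fin N) (Fin N) Tr) : Matrix (Fin N) (Fin N) ℤ :=
  Matrix.of fun k l => (M k l).a
def cc1 (M : Matrix (Fin N) (Fin N) Tr) : Matrix (Fin N) (Fin N) ℤ :=
  Matrix.of fun k l => (M k l).b
def cc2 (M : Matrix (Fin N) (Fin N) Tr) : Matrix (Fin N) (Fin N) ℤ :=
  Matrix.of fun k l => (M k l).c

@[simp] lemma cc0_apply (M : Matrix (Fin N) (Fin N) Tr) (k l) : cc0 M k l = (M k l).a := rfl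
@[simp] lemma cc1_apply (M : Matrix (Fin N) (Fin N) Tr) (k l) : cc1 M k l = (M k l).b := rfl
@[simp] lemma cc2_apply (M : Matrix (Fin N) (Fin N) Tr) (k l) : cc2 M k l = (M k l).c := rfl

lemma cc0_one : cc0 (1 : Matrix (Fin N) (Fin N) Tr) = 1 := by
  ext k l
  simp [Matrix.one_apply, apply_ite Tr.a]

lemma cc1_one : cc1 (1 : Matrix (Fin N) (Fin N) Tr) = 0 := by
  ext k l
  simp [Matrix.one_apply, apply_ite Tr.b]

lemma cc2_one : cc2 (1 : Matrix (Fin N) (Fin N) Tr) = 0 := by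
  ext k l
  simp [Matrix.one_apply, apply_ite Tr.c]

lemma cc0_mul (M X : Matrix (Fin N) (Fin N) Tr) : cc0 (M * X) = cc0 M * cc0 X := by
  ext k l
  have : (∑ m, M k m * X m l).a = Tr.pra (∑ m, M k m * X m l) := rfl
  simp only [cc0_apply, Matrix.mul_apply, this, map_sum]
  simp [Tr.pra]

lemma cc1_mul (M X : Matrix (Fin N) (Fin N) Tr) :
    cc1 (M * X) = cc0 M * cc1 X + cc1 M * cc0 X := by
  ext k l
  have : (∑ m, M k m * X m l).b = Tr.prb (∑ m, M k m * X m l) := rfl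
  simp only [cc1_apply, Matrix.mul_apply, this, map_sum, Matrix.add_apply]
  simp [Tr.prb, Finset.sum_add_distrib]

lemma cc2_mul (M X : Matrix (Fin N) (Fin N) Tr) :
    cc2 (M * X) = cc0 M * cc2 X + cc1 M * cc1 X + cc2 M * cc0 X := by
  ext k l
  have : (∑ m, M k m * X m l).c = Tr.prc (∑ m, M k m * X m l) := rfl
  simp only [cc2_apply, Matrix.mul_apply, this, map_sum, Matrix.add_apply]
  simp [Tr.prc, Finset.sum_add_distrib]

lemma matrix_eq_of_cc (M X : Matrix (Fin N) (Fin N) Tr) (h0 : cc0 M = cc0 X)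
    (h1 : cc1 M = cc1 X) (h2 : cc2 M = cc2 X) : M = X := by
  ext k l
  · exact congrFun (congrFun h0 k) l
  · exact congrFun (congrFun h1 k) l
  · exact congrFun (congrFun h2 k) l

/-! ### Block embeddings of matrices -/

def pick {m n : ℕ} (f : Fin m ↪ Fin n) {k : Fin n} (hk : ∃ a, f a = k) : Fin m :=
  Fintype.choose (fun a => f a = k)
    (hk.elim fun a ha => ⟨a, ha, fun y hy => f.injective (hy.trans ha.symm)⟩)

lemma pick_spec {m n : ℕ} (f : Fin m ↪ Fin n) {k : Fin n} (hk : ∃ a, f a = k) :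
    f (pick f hk) = k :=
  Fintype.choose_spec (fun a => f a = k) _

lemma pick_eq {m n : ℕ} (f : Fin m ↪ Fin n) {k : Fin n} (hk : ∃ a, f a = k)
    {a : Fin m} (ha : f a = k) : pick f hk = a :=
  f.injective ((pick_spec f hk).trans ha.symm)

def emb {m n : ℕ} (f : Fin m ↪ Fin n) (X : Matrix (Fin m) (Fin m) Tr) :
    Matrix (Fin n) (Fin n) Tr :=
  Matrix.of fun k l =>
    if hk : ∃ a, f a = k then
      if hl : ∃ b, f b = l then X (pick f hk) (pick f hl) else 0
    else if k = l then 1 else 0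

lemma emb_apply_of_of {m n : ℕ} (f : Fin m ↪ Fin n) (X : Matrix (Fin m) (Fin m) Tr)
    (a b : Fin m) : emb f X (f a) (f b) = X a b := by
  have hk : ∃ x, f x = f a := ⟨a, rfl⟩
  have hl : ∃ x, f x = f b := ⟨b, rfl⟩
  simp only [emb, Matrix.of_apply, dif_pos hk, dif_pos hl, pick_eq f hk rfl, pick_eq f hl rfl]

lemma emb_apply_not_left {m n : ℕ} (f : Fin m ↪ Fin n) (X : Matrix (Fin m) (Fin m) Tr)
    {k l : Fin n} (hk : ¬∃ a, f a = k) : emb f X k l = if k = l then 1 else 0 := by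
  simp only [emb, Matrix.of_apply, dif_neg hk]

lemma emb_apply_not_right {m n : ℕ} (f : Fin m ↪ Fin n) (X : Matrix (Fin m) (Fin m) Tr)
    {k l : Fin n} (hl : ¬∃ b, f b = l) (hkl : k ≠ l) : emb f X k l = 0 := by
  by_cases hk : ∃ a, f a = k
  · simp only [emb, Matrix.of_apply, dif_pos hk, dif_neg hl]
  · simp only [emb, Matrix.of_apply, dif_neg hk, if_neg hkl]

lemma emb_one {m n : ℕ} (f : Fin m ↪ Fin n) : emb f (1 : Matrix (Fin m) (Fin m) Tr) = 1 := by
  refine Matrix.ext fun k l => ?_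
  by_cases hk : ∃ a, f a = k
  · obtain ⟨a, rfl⟩ := hk
    by_cases hl : ∃ b, f b = l
    · obtain ⟨b, rfl⟩ := hl
      rw [emb_apply_of_of]
      simp [Matrix.one_apply, f.injective.eq_iff]
    · have hkl : f a ≠ l := fun h => hl ⟨a, h⟩
      rw [emb_apply_not_right f _ hl hkl]
      simp [Matrix.one_apply, hkl]
  · rw [emb_apply_not_left f _ hk]
    simp [Matrix.one_apply]


lemma emb_mul {m n : ℕ} (f : Fin m ↪ Fin n) (X Y : Matrix (Fin m) (Fin m) Tr) :
    emb f X * emb f Y = emb f (X * Y) := by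
  refine Matrix.ext fun k l => ?_
  rw [Matrix.mul_apply]
  by_cases hk : ∃ a, f a = k
  · obtain ⟨a, rfl⟩ := hk
    have hsum : ∑ x : Fin n, emb f X (f a) x * emb f Y x l
        = ∑ b : Fin m, emb f X (f a) (f b) * emb f Y (f b) l := by
      rw [← Finset.sum_map Finset.univ f (fun x => emb f X (f a) x * emb f Y x l)]
      symm
      apply Finset.sum_subset (Finset.subset_univ _)
      intro x _ hx
      have hxr : ¬∃ b, f b = x := by simpa [Finset.mem_map] using hx
      have hne : f a ≠ x := fun h => hxr ⟨a, h⟩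
      rw [emb_apply_not_right f X hxr hne, zero_mul]
    by_cases hl : ∃ b, f b = l
    · obtain ⟨b, rfl⟩ := hl
      rw [hsum, emb_apply_of_of, Matrix.mul_apply]
      refine Finset.sum_congr rfl fun b' _ => ?_
      rw [emb_apply_of_of, emb_apply_of_of]
    · have hne : ∀ b : Fin m, f b ≠ l := fun b h => hl ⟨b, h⟩
      have hne' : f a ≠ l := hne a
      rw [hsum, emb_apply_not_right f (X * Y) hl hne']
      apply Finset.sum_eq_zero
      intro b _
      rw [emb_apply_not_right f Y hl (hne b), mul_zero]
  · have hXrow : ∀ x, emb f X k x = if k = x then 1 else 0 :=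
      fun x => emb_apply_not_left f X hk
    have : ∑ x : Fin n, emb f X k x * emb f Y x l
        = ∑ x : Fin n, if k = x then emb f Y x l else 0 := by
      refine Finset.sum_congr rfl fun x _ => ?_
      rw [hXrow x]; split <;> simp
    rw [this, Finset.sum_ite_eq Finset.univ k (fun x => emb f Y x l), if_pos (Finset.mem_univ k)]
    by_cases hl : ∃ b, f b = l
    · obtain ⟨b, rfl⟩ := hl
      have hne : k ≠ f b := fun h => hk ⟨b, h.symm⟩
      rw [emb_apply_not_left f Y hk, emb_apply_not_left f (X * Y) hk]
    · rw [emb_apply_not_left f Y hk, emb_apply_not_left f (X * Y) hk]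

lemma emb_comp {m p n : ℕ} (f : Fin m ↪ Fin p) (g : Fin p ↪ Fin n)
    (X : Matrix (Fin m) (Fin m) Tr) : emb g (emb f X) = emb (f.trans g) X := by
  refine Matrix.ext fun k l => ?_
  by_cases hk : ∃ a, (f.trans g) a = k
  · obtain ⟨a, rfl⟩ := hk
    by_cases hl : ∃ b, (f.trans g) b = l
    · obtain ⟨b, rfl⟩ := hl
      rw [emb_apply_of_of (f.trans g) X a b]
      show emb g (emb f X) (g (f a)) (g (f b)) = X a b
      rw [emb_apply_of_of, emb_apply_of_of]
    · by_cases hl' : ∃ c, g c = l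
      · obtain ⟨c, rfl⟩ := hl'
        have hcf : ¬∃ b, f b = c := fun ⟨b, hb⟩ => hl ⟨b, by simp [Function.Embedding.trans_apply, hb]⟩
        have hfac : f a ≠ c := fun h => hcf ⟨a, h⟩
        have hkl : (f.trans g) a ≠ g c := by
          simp only [Function.Embedding.trans_apply, g.injective.ne_iff]
          exact hfac
        rw [emb_apply_not_right (f.trans g) X hl hkl]
        show emb g (emb f X) (g (f a)) (g c) = 0
        rw [emb_apply_of_of, emb_apply_not_right f X hcf hfac]
      · have hkl : (f.trans g) a ≠ l := fun h => hl' ⟨f a, by simpa [Function.Embedding.trans_apply] using h⟩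
        rw [emb_apply_not_right (f.trans g) X hl hkl]
        exact emb_apply_not_right g (emb f X) hl' hkl
  · by_cases hk' : ∃ c, g c = k
    · obtain ⟨c, rfl⟩ := hk'
      have hcf : ¬∃ a, f a = c := fun ⟨a, ha⟩ => hk ⟨a, by simp [Function.Embedding.trans_apply, ha]⟩
      by_cases hl' : ∃ d, g d = l
      · obtain ⟨d, rfl⟩ := hl'
        rw [emb_apply_not_left (f.trans g) X hk]
        show emb g (emb f X) (g c) (g d) = _
        rw [emb_apply_of_of, emb_apply_not_left f X hcf]
        simp [g.injective.eq_iff]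
      · have hkl : g c ≠ l := fun h => hl' ⟨c, h⟩
        rw [emb_apply_not_left (f.trans g) X hk, if_neg hkl]
        exact emb_apply_not_right g (emb f X) hl' hkl
    · rw [emb_apply_not_left (f.trans g) X hk, emb_apply_not_left g (emb f X) hk']

/-- `emb` bundled as a monoid hom on multiplicative matrix monoids. -/
def embHom {m n : ℕ} (f : Fin m ↪ Fin n) :
    Matrix (Fin m) (Fin m) Tr →* Matrix (Fin n) (Fin n) Tr where
  toFun := emb f
  map_one' := emb_one f
  map_mul' X Y := (emb_mul f X Y).symm


/-! ### Specific embeddings -/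

def embAt (i m : ℕ) {n : ℕ} (h : i + m ≤ n) : Fin m ↪ Fin n where
  toFun k := ⟨i + (k : ℕ), by have := k.isLt; omega⟩
  inj' k l hkl := by
    have := congrArg Fin.val hkl
    simp only at this
    exact Fin.ext (by omega)

@[simp] lemma embAt_apply (i m : ℕ) {n : ℕ} (h : i + m ≤ n) (k : Fin m) :
    (embAt i m h) k = ⟨i + (k : ℕ), by have := k.isLt; omega⟩ := rfl

lemma embAt_trans {p n : ℕ} (i j m r : ℕ) (h1 : j + m ≤ p) (h2 : i + p ≤ n)
    (hr : r = i + j) (hrm : r + m ≤ n) :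
    (embAt j m h1).trans (embAt i p h2) = embAt r m hrm := by
  ext k
  simp only [Function.Embedding.trans_apply, embAt_apply]
  omega

def embPair (i j : ℕ) {n : ℕ} (hij : i + 2 ≤ j) (hj : j + 2 ≤ n) : Fin 4 ↪ Fin n where
  toFun k := if (k : ℕ) < 2 then ⟨i + (k : ℕ), by omega⟩
             else ⟨j + ((k : ℕ) - 2), by have := k.isLt; omega⟩
  inj' k l hkl := by
    have hk := k.isLt; have hl := l.isLt
    have h := congrArg Fin.val hkl
    simp only [apply_ite Fin.val] at h
    apply Fin.ext
    split_ifs at h <;> omega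

lemma embPair_left {n : ℕ} (i j : ℕ) (hij : i + 2 ≤ j) (hj : j + 2 ≤ n) (h2 : i + 2 ≤ n) :
    (embAt 0 2 (by omega) : Fin 2 ↪ Fin 4).trans (embPair i j hij hj) = embAt i 2 h2 := by
  ext k
  have hk := k.isLt
  simp only [Function.Embedding.trans_apply, embAt_apply, embPair,
    Function.Embedding.coeFn_mk]
  show ((if (0 + (k:ℕ)) < 2 then _ else _ : Fin n) : ℕ) = _
  rw [if_pos (by simpa using hk)]
  simp only [Fin.mk.injEq]
  omega

lemma embPair_right {n : ℕ} (i j : ℕ) (hij : i + 2 ≤ j) (hj : j + 2 ≤ n) :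
    (embAt 2 2 (by omega) : Fin 2 ↪ Fin 4).trans (embPair i j hij hj) = embAt j 2 hj := by
  ext k
  have hk := k.isLt
  simp only [Function.Embedding.trans_apply, embAt_apply, embPair,
    Function.Embedding.coeFn_mk]
  show ((if (2 + (k:ℕ)) < 2 then _ else _ : Fin n) : ℕ) = _
  rw [if_neg (by omega)]
  simp only [Fin.mk.injEq]
  omega

/-! ### The truncated Burau matrices -/

def burM : Matrix (Fin 2) (Fin 2) Tr := !![⟨0,-1,0⟩, ⟨1,1,0⟩; ⟨1,0,0⟩, ⟨0,0,0⟩]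
def burMi : Matrix (Fin 2) (Fin 2) Tr := !![⟨0,0,0⟩, ⟨1,0,0⟩; ⟨1,-1,1⟩, ⟨0,1,-1⟩]

def burU : (Matrix (Fin 2) (Fin 2) Tr)ˣ :=
  ⟨burM, burMi, by decide, by decide⟩

/-- The truncated Burau image of the `i`-th Artin generator. -/
def genU (n : ℕ) (i : Fin (n - 1)) : (Matrix (Fin n) (Fin n) Tr)ˣ :=
  Units.map (embHom (embAt (i : ℕ) 2 (by have := i.isLt; omega))) burU

lemma units_emb_trans {m p q : ℕ} (f : Fin m ↪ Fin p) (g : Fin p ↪ Fin q)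
    (u : (Matrix (Fin m) (Fin m) Tr)ˣ) :
    Units.map (embHom (f.trans g)) u = Units.map (embHom g) (Units.map (embHom f) u) := by
  apply Units.ext
  show emb (f.trans g) u.val = emb g (emb f u.val)
  rw [emb_comp]

/-! ### The braid relations hold for the truncated Burau matrices -/

def bA3 : (Matrix (Fin 3) (Fin 3) Tr)ˣ := Units.map (embHom (embAt 0 2 (by omega))) burU
def bB3 : (Matrix (Fin 3) (Fin 3) Tr)ˣ := Units.map (embHom (embAt 1 2 (by omega))) burU
def bA4 : (Matrix (Fin 4) (Fin 4) Tr)ˣ := Units.map (embHom (embAt 0 2 (by omega))) burU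
def bB4 : (Matrix (Fin 4) (Fin 4) Tr)ˣ := Units.map (embHom (embAt 2 2 (by omega))) burU

lemma braid3 : bA3 * bB3 * bA3 = bB3 * bA3 * bB3 :=
  Units.ext (by decide)

lemma comm4 : bA4 * bB4 = bB4 * bA4 :=
  Units.ext (by decide)

lemma genU_eq_far {n : ℕ} (i j : Fin (n - 1)) (hij : (i : ℕ) + 2 ≤ (j : ℕ)) :
    ∃ φ : (Matrix (Fin 4) (Fin 4) Tr)ˣ →* (Matrix (Fin n) (Fin n) Tr)ˣ,
      genU n i = φ bA4 ∧ genU n j = φ bB4 := by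
  have hi := i.isLt; have hj := j.isLt
  have hjn : (j : ℕ) + 2 ≤ n := by omega
  refine ⟨Units.map (embHom (embPair (i : ℕ) (j : ℕ) hij hjn)), ?_, ?_⟩
  · rw [genU, ← embPair_left (i : ℕ) (j : ℕ) hij hjn (by omega), units_emb_trans]
    rfl
  · rw [genU, ← embPair_right (i : ℕ) (j : ℕ) hij hjn, units_emb_trans]
    rfl

lemma genU_eq_near {n : ℕ} (i j : Fin (n - 1)) (hij : (i : ℕ) + 1 = (j : ℕ)) :
    ∃ φ : (Matrix (Fin 3) (Fin 3) Tr)ˣ →* (Matrix (Fin n) (Fin n) Tr)ˣ,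
      genU n i = φ bA3 ∧ genU n j = φ bB3 := by
  have hi := i.isLt; have hj := j.isLt
  have h3 : (i : ℕ) + 3 ≤ n := by omega
  refine ⟨Units.map (embHom (embAt (i : ℕ) 3 h3)), ?_, ?_⟩
  · rw [genU, ← embAt_trans (i : ℕ) 0 2 (i : ℕ) (by omega) h3 (by omega) (by omega),
      units_emb_trans]
    rfl
  · rw [genU, ← embAt_trans (i : ℕ) 1 2 (j : ℕ) (by omega) h3 (by omega) (by omega),
      units_emb_trans]
    rfl

lemma genU_relations (n : ℕ) :
    ∀ r ∈ braidRels n, FreeGroup.lift (genU n) r = 1 := by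
  rintro r (⟨i, j, hij, rfl⟩ | ⟨i, j, hij, rfl⟩) <;>
    simp only [σrel1, σrel2, map_mul, map_inv, FreeGroup.lift_apply_of]
  · obtain ⟨φ, h1, h2⟩ := genU_eq_far i j hij
    rw [h1, h2]
    have hcomm : φ bA4 * φ bB4 = φ bB4 * φ bA4 := by
      rw [← map_mul, ← map_mul, comm4]
    rw [hcomm]
    group
  · obtain ⟨φ, h1, h2⟩ := genU_eq_near i j hij
    rw [h1, h2, mul_inv_eq_one, ← map_mul, ← map_mul, ← map_mul, ← map_mul, braid3]

/-- The truncated Burau representation of the braid group. -/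
def Θ (n : ℕ) : B n →* (Matrix (Fin n) (Fin n) Tr)ˣ :=
  PresentedGroup.toGroup (genU_relations n)

lemma Θ_of (n : ℕ) (i : Fin (n - 1)) : Θ n (PresentedGroup.of i) = genU n i :=
  PresentedGroup.toGroup.of _

/-! ### Permutation matrices -/

def PM {n : ℕ} (s : Equiv.Perm (Fin n)) : Matrix (Fin n) (Fin n) ℤ :=
  Matrix.of fun k l => if s l = k then 1 else 0

@[simp] lemma PM_apply {n : ℕ} (s : Equiv.Perm (Fin n)) (k l) :
    PM s k l = if s l = k then 1 else 0 := rfl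

lemma PM_one {n : ℕ} : PM (1 : Equiv.Perm (Fin n)) = 1 := by
  refine Matrix.ext fun k l => ?_
  simp [Matrix.one_apply, eq_comm]

lemma PM_mul {n : ℕ} (s t : Equiv.Perm (Fin n)) : PM (s * t) = PM s * PM t := by
  refine Matrix.ext fun k l => ?_
  rw [Matrix.mul_apply, Finset.sum_eq_single (t l)]
  · simp; rfl
  · intro m _ hm
    simp [Ne.symm hm]
  · simp

lemma PM_mul_apply {n : ℕ} (s : Equiv.Perm (Fin n)) (M : Matrix (Fin n) (Fin n) ℤ) (k l) :
    (PM s * M) k l = M (s⁻¹ k) l := by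
  rw [Matrix.mul_apply, Finset.sum_eq_single (s⁻¹ k)]
  · simp
  · intro m _ hm
    have : s m ≠ k := fun h => hm (by simp [← h])
    simp [this]
  · simp

lemma mul_PM_apply {n : ℕ} (s : Equiv.Perm (Fin n)) (M : Matrix (Fin n) (Fin n) ℤ) (k l) :
    (M * PM s) k l = M k (s l) := by
  rw [Matrix.mul_apply, Finset.sum_eq_single (s l)]
  · simp
  · intro m _ hm
    simp [Ne.symm hm]
  · simp

/-- Permutation matrices as a monoid hom to units. -/
def PMU {n : ℕ} : Equiv.Perm (Fin n) →* (Matrix (Fin n) (Fin n) ℤ)ˣ where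
  toFun s := ⟨PM s, PM s⁻¹, by rw [← PM_mul, mul_inv_cancel, PM_one],
    by rw [← PM_mul, inv_mul_cancel, PM_one]⟩
  map_one' := Units.ext (by simpa using PM_one)
  map_mul' s t := Units.ext (by simpa using PM_mul s t)

/-- Reduction `ε ↦ 0` at the level of matrix units. -/
def redU (n : ℕ) : (Matrix (Fin n) (Fin n) Tr)ˣ →* (Matrix (Fin n) (Fin n) ℤ)ˣ :=
  Units.map (Tr.pra.mapMatrix : Matrix (Fin n) (Fin n) Tr →+* Matrix (Fin n) (Fin n) ℤ).toMonoidHom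

lemma redU_val {n : ℕ} (u : (Matrix (Fin n) (Fin n) Tr)ˣ) :
    (redU n u).val = cc0 u.val := by
  refine Matrix.ext fun k l => ?_
  rfl

/-! ### Compatibility with the symmetric group representation -/

lemma cc0_emb_burM {n : ℕ} (f : Fin 2 ↪ Fin n) :
    cc0 (emb f burM) = PM (Equiv.swap (f 0) (f 1)) := by
  have hab : f 0 ≠ f 1 := by simp [f.injective.ne_iff]
  refine Matrix.ext fun k l => ?_
  show (emb f burM k l).a = if Equiv.swap (f 0) (f 1) l = k then 1 else 0
  by_cases hl : ∃ y, f y = l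
  · obtain ⟨y, rfl⟩ := hl
    by_cases hk : ∃ x, f x = k
    · obtain ⟨x, rfl⟩ := hk
      rw [emb_apply_of_of]
      fin_cases x <;> fin_cases y <;>
        simp_all [burM, Equiv.swap_apply_left, Equiv.swap_apply_right, hab,
          hab.symm, f.injective.eq_iff]
    · rw [emb_apply_not_left f burM hk]
      have hne : k ≠ f y := fun h => hk ⟨y, h.symm⟩
      have : Equiv.swap (f 0) (f 1) (f y) ≠ k := by
        fin_cases y
        · show Equiv.swap (f 0) (f 1) (f 0) ≠ k
          rw [Equiv.swap_apply_left]
          exact fun h => hk ⟨1, h⟩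
        · show Equiv.swap (f 0) (f 1) (f 1) ≠ k
          rw [Equiv.swap_apply_right]
          exact fun h => hk ⟨0, h⟩
      simp [hne, this]
  · have hla : l ≠ f 0 := fun h => hl ⟨0, h.symm⟩
    have hlb : l ≠ f 1 := fun h => hl ⟨1, h.symm⟩
    rw [Equiv.swap_apply_of_ne_of_ne hla hlb]
    by_cases hk : ∃ x, f x = k
    · obtain ⟨x, rfl⟩ := hk
      have hkl : f x ≠ l := fun h => hl ⟨x, h⟩
      rw [emb_apply_not_right f burM (fun ⟨y', hy⟩ => hl ⟨y', hy⟩) hkl]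
      simp [Ne.symm hkl]
    · rw [emb_apply_not_left f burM hk]
      by_cases hkl : k = l <;> simp [hkl, eq_comm]

lemma cc0_genU {n : ℕ} (i : Fin (n - 1)) :
    cc0 ((genU n i).val) = PM (permGen n i) := by
  have hi := i.isLt
  have h := cc0_emb_burM (embAt (i : ℕ) 2 (by omega : (i : ℕ) + 2 ≤ n))
  have h0 : (embAt (i : ℕ) 2 (by omega : (i : ℕ) + 2 ≤ n)) 0
      = (⟨(i : ℕ), by omega⟩ : Fin n) := by
    apply Fin.ext; simp
  have h1 : (embAt (i : ℕ) 2 (by omega : (i : ℕ) + 2 ≤ n)) 1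
      = (⟨(i : ℕ) + 1, by omega⟩ : Fin n) := by
    apply Fin.ext; simp
  rw [h0, h1] at h
  exact h

lemma cc0_Θ {n : ℕ} (α : B n) : cc0 ((Θ n α).val) = PM (braidπ n α) := by
  have h : (redU n).comp (Θ n) = PMU.comp (braidπ n) := by
    refine PresentedGroup.ext fun i => ?_
    apply Units.ext
    show (redU n (Θ n (.of i))).val = (PMU (braidπ n (.of i))).val
    rw [Θ_of, redU_val, cc0_genU]
    rw [show braidπ n (PresentedGroup.of i) = permGen n i from PresentedGroup.toGroup.of _]
    rfl
  have h2 : redU n (Θ n α) = PMU (braidπ n α) := DFunLike.congr_fun h α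
  rw [← redU_val, h2]
  rfl

/-! ### Nilpotency structure of the congruence kernel -/

section Klemmas

variable {n : ℕ}

lemma cc0_inv (u : (Matrix (Fin n) (Fin n) Tr)ˣ) (h0 : cc0 u.val = 1) :
    cc0 ((u⁻¹ : (Matrix (Fin n) (Fin n) Tr)ˣ) : Matrix (Fin n) (Fin n) Tr) = 1 := by
  have h := congrArg cc0 u.mul_inv
  rw [cc0_mul, h0, one_mul, cc0_one] at h
  exact h

lemma cc1_inv (u : (Matrix (Fin n) (Fin n) Tr)ˣ) (h0 : cc0 u.val = 1) :
    cc1 ((u⁻¹ : (Matrix (Fin n) (Fin n) Tr)ˣ) : Matrix (Fin n) (Fin n) Tr)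
      = -(cc1 u.val) := by
  have h := congrArg cc1 u.mul_inv
  rw [cc1_mul, h0, one_mul, cc0_inv u h0, mul_one, cc1_one] at h
  exact eq_neg_of_add_eq_zero_left h

lemma cc1_mul_of_one {M X : Matrix (Fin n) (Fin n) Tr} (hM : cc0 M = 1) (hX : cc0 X = 1) :
    cc1 (M * X) = cc1 M + cc1 X := by
  rw [cc1_mul, hM, hX, one_mul, mul_one, add_comm]

lemma K1 (u v : (Matrix (Fin n) (Fin n) Tr)ˣ) (hu : cc0 u.val = 1) (hv : cc0 v.val = 1) :
    cc0 ((⁅u, v⁆ : (Matrix (Fin n) (Fin n) Tr)ˣ) : Matrix (Fin n) (Fin n) Tr) = 1 ∧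
    cc1 ((⁅u, v⁆ : (Matrix (Fin n) (Fin n) Tr)ˣ) : Matrix (Fin n) (Fin n) Tr) = 0 := by
  have hval : ((⁅u, v⁆ : (Matrix (Fin n) (Fin n) Tr)ˣ) : Matrix (Fin n) (Fin n) Tr)
      = u.val * v.val * ((u⁻¹ : _ˣ) : Matrix (Fin n) (Fin n) Tr)
        * ((v⁻¹ : _ˣ) : Matrix (Fin n) (Fin n) Tr) := rfl
  have hu' := cc0_inv u hu
  have hv' := cc0_inv v hv
  constructor
  · rw [hval, cc0_mul, cc0_mul, cc0_mul, hu, hv, hu', hv']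
    simp
  · rw [hval, cc1_mul_of_one (by rw [cc0_mul, cc0_mul, hu, hv, hu']; simp) hv',
      cc1_mul_of_one (by rw [cc0_mul, hu, hv]; simp) hu',
      cc1_mul_of_one hu hv, cc1_inv u hu, cc1_inv v hv]
    abel

lemma K2 (u v : (Matrix (Fin n) (Fin n) Tr)ˣ) (hu0 : cc0 u.val = 1) (hu1 : cc1 u.val = 0)
    (hv0 : cc0 v.val = 1) : u * v = v * u := by
  apply Units.ext
  show u.val * v.val = v.val * u.val
  apply matrix_eq_of_cc
  · rw [cc0_mul, cc0_mul, hu0, hv0]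
  · rw [cc1_mul, cc1_mul, hu0, hv0, hu1]
    simp
  · rw [cc2_mul, cc2_mul, hu0, hv0, hu1]
    simp [add_comm]

lemma K3 (u x : (Matrix (Fin n) (Fin n) Tr)ˣ) (hx0 : cc0 x.val = 1) (hx1 : cc1 x.val = 0) :
    cc2 ((u * x * u⁻¹ : (Matrix (Fin n) (Fin n) Tr)ˣ) : Matrix (Fin n) (Fin n) Tr)
      = cc0 u.val * cc2 x.val * cc0 ((u⁻¹ : _ˣ) : Matrix (Fin n) (Fin n) Tr) := by
  set A := u.val with hA
  set X := x.val with hX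
  set B := ((u⁻¹ : (Matrix (Fin n) (Fin n) Tr)ˣ) : Matrix (Fin n) (Fin n) Tr) with hB
  have hAB : A * B = 1 := u.mul_inv
  have hzero : cc0 A * cc2 B + cc1 A * cc1 B + cc2 A * cc0 B = 0 := by
    have := congrArg cc2 hAB
    rwa [cc2_mul, cc2_one] at this
  have hval : ((u * x * u⁻¹ : (Matrix (Fin n) (Fin n) Tr)ˣ)
      : Matrix (Fin n) (Fin n) Tr) = A * X * B := rfl
  rw [hval, cc2_mul (A * X) B, cc0_mul, cc1_mul, cc2_mul A X, hx0, hx1]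
  have expand : cc0 A * 1 * cc2 B + (cc0 A * 0 + cc1 A * 1) * cc1 B +
      (cc0 A * cc2 X + cc1 A * 0 + cc2 A * 1) * cc0 B
      = (cc0 A * cc2 B + cc1 A * cc1 B + cc2 A * cc0 B) + cc0 A * cc2 X * cc0 B := by
    noncomm_ring
  rw [expand, hzero, zero_add]

end Klemmas

/-! ### The representation on the lower central series -/

section Gamma

variable {n : ℕ}

/-- Units congruent to `1` mod `ε²`. -/
def Wsub (n : ℕ) : Subgroup (Matrix (Fin n) (Fin n) Tr)ˣ where
  carrier := {u | cc0 u.val = 1 ∧ cc1 u.val = 0}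
  one_mem' := by
    constructor
    · show cc0 (1 : Matrix (Fin n) (Fin n) Tr) = 1
      exact cc0_one
    · show cc1 (1 : Matrix (Fin n) (Fin n) Tr) = 0
      exact cc1_one
  mul_mem' := by
    rintro a b ⟨ha0, ha1⟩ ⟨hb0, hb1⟩
    constructor
    · show cc0 (a.val * b.val) = 1
      rw [cc0_mul, ha0, hb0, one_mul]
    · show cc1 (a.val * b.val) = 0
      rw [cc1_mul, ha0, hb0, ha1, hb1]
      simp
  inv_mem' := by
    rintro a ⟨ha0, ha1⟩
    exact ⟨cc0_inv a ha0, by rw [cc1_inv a ha0, ha1, neg_zero]⟩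

lemma theta_P {p : B n} (hp : p ∈ P n) : cc0 ((Θ n p).val) = 1 := by
  rw [cc0_Θ, show braidπ n p = 1 from hp, PM_one]

lemma map_gamma2_le_W :
    Subgroup.map ((Θ n).comp (P n).subtype) (Subgroup.lowerCentralSeries (⊤ : Subgroup (P n)) 1) ≤ Wsub n := by
  rw [Subgroup.top_lowerCentralSeries_one, commutator_def, Subgroup.map_commutator,
    Subgroup.commutator_le]
  rintro x ⟨p, -, rfl⟩ y ⟨q, -, rfl⟩
  have h1 : cc0 ((((Θ n).comp (P n).subtype) p).val) = 1 := theta_P p.2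
  have h2 : cc0 ((((Θ n).comp (P n).subtype) q).val) = 1 := theta_P q.2
  exact ⟨(K1 _ _ h1 h2).1, (K1 _ _ h1 h2).2⟩

lemma theta_gamma2 {g : B n} (hg : g ∈ gammaB n 2) : Θ n g ∈ Wsub n := by
  obtain ⟨y, hy, rfl⟩ := hg
  exact map_gamma2_le_W (Subgroup.mem_map_of_mem _ hy)

lemma theta_gamma3 {h : B n} (hh : h ∈ gammaB n 3) : Θ n h = 1 := by
  obtain ⟨y, hy, rfl⟩ := hh
  have hle : Subgroup.map ((Θ n).comp (P n).subtype) (Subgroup.lowerCentralSeries (⊤ : Subgroup (P n)) 2) ≤ ⊥ := by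
    show Subgroup.map ((Θ n).comp (P n).subtype) ⁅Subgroup.lowerCentralSeries (⊤ : Subgroup (P n)) 1, ⊤⁆ ≤ ⊥
    rw [Subgroup.map_commutator, Subgroup.commutator_le]
    intro x hx y' hy'
    obtain ⟨q, -, rfl⟩ := hy'
    have hx' : x ∈ Wsub n := map_gamma2_le_W hx
    have hcomm := K2 x _ hx'.1 hx'.2 (theta_P q.2)
    rw [Subgroup.mem_bot]
    exact commutatorElement_eq_one_iff_mul_comm.mpr hcomm
  exact Subgroup.mem_bot.mp (hle (Subgroup.mem_map_of_mem _ hy))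

/-- Easy direction: commutators of pure braids with `Γ₂` lie in `Γ₃`. -/
lemma commutator_mem_gamma3 {α g : B n} (hα : α ∈ P n) (hg : g ∈ gammaB n 2) :
    ⁅α, g⁆ ∈ gammaB n 3 := by
  obtain ⟨y, hy, rfl⟩ := hg
  set a : P n := ⟨α, hα⟩ with ha
  have hmem : ⁅a, y⁆ ∈ Subgroup.lowerCentralSeries (⊤ : Subgroup (P n)) 2 := by
    show ⁅a, y⁆ ∈ ⁅Subgroup.lowerCentralSeries (⊤ : Subgroup (P n)) 1, ⊤⁆
    have h1 : ⁅y, a⁆ ∈ ⁅Subgroup.lowerCentralSeries (⊤ : Subgroup (P n)) 1, ⊤⁆ :=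
      Subgroup.commutator_mem_commutator hy (Subgroup.mem_top a)
    rw [← commutatorElement_inv]
    exact inv_mem h1
  exact ⟨⁅a, y⁆, hmem, by rw [map_commutatorElement]; rfl⟩

end Gamma

/-! ### Surjectivity of the projection to the symmetric group -/

lemma braidπ_of (n : ℕ) (i : Fin (n - 1)) :
    braidπ n (PresentedGroup.of i) = permGen n i :=
  PresentedGroup.toGroup.of _

lemma swap_mem_range (n : ℕ) :
    ∀ (d : ℕ) (a b : Fin n), (b : ℕ) = (a : ℕ) + d + 1 →
      Equiv.swap a b ∈ (braidπ n).range := by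
  intro d
  induction d with
  | zero =>
    intro a b hab
    have hb := b.isLt
    have ha : (a : ℕ) < n - 1 := by omega
    refine ⟨PresentedGroup.of ⟨(a : ℕ), ha⟩, ?_⟩
    rw [braidπ_of]
    show Equiv.swap ⟨(a : ℕ), by omega⟩ ⟨(a : ℕ) + 1, by omega⟩ = Equiv.swap a b
    congr 1
    exact Fin.ext (show (a : ℕ) + 1 = (b : ℕ) by omega)
  | succ d ih =>
    intro a b hab
    have hb := b.isLt
    set c : Fin n := ⟨(a : ℕ) + 1, by omega⟩ with hc
    have hac : a ≠ c := by simp [hc, Fin.ext_iff]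
    have hab' : a ≠ b := by simp [Fin.ext_iff]; omega
    have hcb : c ≠ b := by simp [hc, Fin.ext_iff]; omega
    have h1 : Equiv.swap a c ∈ (braidπ n).range := by
      have ha : (a : ℕ) < n - 1 := by omega
      refine ⟨PresentedGroup.of ⟨(a : ℕ), ha⟩, ?_⟩
      rw [braidπ_of]
      show Equiv.swap ⟨(a : ℕ), by omega⟩ ⟨(a : ℕ) + 1, by omega⟩ = Equiv.swap a c
      congr 1
    have h2 : Equiv.swap c b ∈ (braidπ n).range := ih c b (by simp [hc]; omega)
    have key : Equiv.swap a b
        = Equiv.swap c b * Equiv.swap a c * (Equiv.swap c b)⁻¹ := by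
      rw [← Equiv.swap_apply_apply]
      congr 1
      · exact (Equiv.swap_apply_of_ne_of_ne hac hab').symm
      · exact (Equiv.swap_apply_left c b).symm
    rw [key]
    exact mul_mem (mul_mem h2 h1) (inv_mem h2)

lemma braidπ_surjective (n : ℕ) : Function.Surjective (braidπ n) := by
  intro s
  suffices h : s ∈ (braidπ n).range by exact h
  refine Equiv.Perm.swap_induction_on s (one_mem _) ?_
  intro f y z hyz hf
  refine mul_mem ?_ hf
  rcases lt_or_gt_of_ne hyz with h | h
  · exact swap_mem_range n ((z : ℕ) - (y : ℕ) - 1) y z (by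
      have : (y : ℕ) < (z : ℕ) := h
      omega)
  · rw [Equiv.swap_comm]
    exact swap_mem_range n ((y : ℕ) - (z : ℕ) - 1) z y (by
      have : (z : ℕ) < (y : ℕ) := h
      omega)

/-! ### Constructing permutations with prescribed values -/

lemma exists_perm_extend {n : ℕ} :
    ∀ l : List (Fin n × Fin n), (l.map Prod.fst).Nodup → (l.map Prod.snd).Nodup →
      ∃ u : Equiv.Perm (Fin n), ∀ p ∈ l, u p.1 = p.2 := by
  intro l
  induction l with
  | nil => exact fun _ _ => ⟨1, by simp⟩
  | cons hd tl ih =>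
    intro h1 h2
    simp only [List.map_cons, List.nodup_cons] at h1 h2
    obtain ⟨u, hu⟩ := ih h1.2 h2.2
    refine ⟨Equiv.swap hd.2 (u hd.1) * u, ?_⟩
    intro p hp
    rcases List.mem_cons.mp hp with rfl | hp'
    · simp [Equiv.Perm.mul_apply, Equiv.swap_apply_right]
    · have hup : u p.1 = p.2 := hu p hp'
      have hne1 : p.2 ≠ hd.2 := by
        intro h
        exact h2.1 (h ▸ List.mem_map_of_mem (f := Prod.snd) hp')
      have hne2 : p.2 ≠ u hd.1 := by
        intro h
        have hpq : p.1 = hd.1 := u.injective (by rw [hup, h])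
        exact h1.1 (hpq ▸ List.mem_map_of_mem (f := Prod.fst) hp')
      show Equiv.swap hd.2 (u hd.1) (u p.1) = p.2
      rw [hup, Equiv.swap_apply_of_ne_of_ne hne1 hne2]

/-! ### A witness conjugate for any nontrivial permutation -/

lemma exists_avoid {n : ℕ} (hn : 4 ≤ n) (x y : Fin n) : ∃ b : Fin n, b ≠ x ∧ b ≠ y := by
  have hns : ¬ (Finset.univ ⊆ ({x, y} : Finset (Fin n))) := by
    intro hsub
    have hc := Finset.card_le_card hsub
    have h2 : ({x, y} : Finset (Fin n)).card ≤ 2 :=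
      le_trans (Finset.card_insert_le _ _) (by simp)
    rw [Finset.card_univ, Fintype.card_fin] at hc
    omega
  obtain ⟨b, -, hb⟩ := Finset.not_subset.mp hns
  simp only [Finset.mem_insert, Finset.mem_singleton, not_or] at hb
  exact ⟨b, hb.1, hb.2⟩

lemma exists_conj_witness {n : ℕ} (hn : 4 ≤ n) (s : Equiv.Perm (Fin n)) (hs : s ≠ 1) :
    ∃ t : Equiv.Perm (Fin n), (∃ u : Equiv.Perm (Fin n), t = u⁻¹ * s * u) ∧
      t ⟨0, by omega⟩ = ⟨1, by omega⟩ ∧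
      (t ⟨2, by omega⟩ = ⟨2, by omega⟩ ∨ t ⟨1, by omega⟩ = ⟨3, by omega⟩ ∨
       t ⟨2, by omega⟩ = ⟨3, by omega⟩) := by
  set i0 : Fin n := ⟨0, by omega⟩
  set i1 : Fin n := ⟨1, by omega⟩
  set i2 : Fin n := ⟨2, by omega⟩
  set i3 : Fin n := ⟨3, by omega⟩
  have hi01 : i0 ≠ i1 := by simp [i0, i1, Fin.ext_iff]
  have hi02 : i0 ≠ i2 := by simp [i0, i2, Fin.ext_iff]
  have hi03 : i0 ≠ i3 := by simp [i0, i3, Fin.ext_iff]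
  have hi12 : i1 ≠ i2 := by simp [i1, i2, Fin.ext_iff]
  have hi13 : i1 ≠ i3 := by simp [i1, i3, Fin.ext_iff]
  have hi23 : i2 ≠ i3 := by simp [i2, i3, Fin.ext_iff]
  by_cases hfix : ∃ c, s c = c
  · -- s has a fixed point (and a moved point): land in first disjunct
    obtain ⟨c, hc⟩ := hfix
    have hmoved : ∃ a, s a ≠ a := by
      by_contra h
      push_neg at h
      exact hs (Equiv.ext h)
    obtain ⟨a, ha⟩ := hmoved
    have hsa : s a ≠ a := ha
    have hca : c ≠ a := fun h => ha (h ▸ hc)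
    have hcsa : c ≠ s a := by
      intro h
      have : s (s a) = s a := by rw [← h, hc, h]
      exact ha (s.injective this)
    obtain ⟨u, hu⟩ := exists_perm_extend [(i0, a), (i1, s a), (i2, c)]
      (by simp [List.nodup_cons]; tauto)
      (by
        have e1 := Ne.symm hsa
        have e2 := hca.symm
        have e3 := Ne.symm hcsa
        simp [List.nodup_cons]; tauto)
    have hu0 : u i0 = a := hu (i0, a) (by simp)
    have hu1 : u i1 = s a := hu (i1, s a) (by simp)
    have hu2 : u i2 = c := hu (i2, c) (by simp)
    refine ⟨u⁻¹ * s * u, ⟨u, rfl⟩, ?_, Or.inl ?_⟩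
    · show u⁻¹ (s (u i0)) = i1
      rw [hu0, ← hu1, Equiv.Perm.inv_def, Equiv.symm_apply_apply]
    · show u⁻¹ (s (u i2)) = i2
      rw [hu2, hc, ← hu2, Equiv.Perm.inv_def, Equiv.symm_apply_apply]
  · push_neg at hfix
    by_cases h2 : ∃ a, s (s a) ≠ a
    · -- an orbit of length ≥ 3: second disjunct
      obtain ⟨a, hssa⟩ := h2
      have ha : s a ≠ a := hfix a
      have hsasa : s (s a) ≠ s a := fun h => ha (s.injective h)
      obtain ⟨u, hu⟩ := exists_perm_extend [(i0, a), (i1, s a), (i3, s (s a))]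
        (by simp [List.nodup_cons]; tauto)
        (by
          have e1 := Ne.symm ha
          have e2 : a ≠ s (s a) := fun h => hssa h.symm
          have e3 := Ne.symm hsasa
          simp [List.nodup_cons]; tauto)
      have hu0 : u i0 = a := hu (i0, a) (by simp)
      have hu1 : u i1 = s a := hu (i1, s a) (by simp)
      have hu3 : u i3 = s (s a) := hu (i3, s (s a)) (by simp)
      refine ⟨u⁻¹ * s * u, ⟨u, rfl⟩, ?_, Or.inr (Or.inl ?_)⟩
      · show u⁻¹ (s (u i0)) = i1
        rw [hu0, ← hu1, Equiv.Perm.inv_def, Equiv.symm_apply_apply]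
      · show u⁻¹ (s (u i1)) = i3
        rw [hu1, ← hu3, Equiv.Perm.inv_def, Equiv.symm_apply_apply]
    · -- fixed-point-free involution: third disjunct
      push_neg at h2
      set a : Fin n := ⟨0, by omega⟩ with hadef
      have ha : s a ≠ a := hfix a
      obtain ⟨b, hba, hbsa⟩ := exists_avoid hn a (s a)
      have hb : s b ≠ b := hfix b
      have hsba : s b ≠ a := by
        intro h
        exact hbsa (by rw [← h, h2])
      have hsbsa : s b ≠ s a := fun h => hba (s.injective h)
      obtain ⟨u, hu⟩ := exists_perm_extend [(i0, a), (i1, s a), (i2, b), (i3, s b)]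
        (by simp [List.nodup_cons]; tauto)
        (by
          have e1 := Ne.symm ha
          have e2 := hba.symm
          have e3 := Ne.symm hsba
          have e4 := Ne.symm hbsa
          have e5 := Ne.symm hsbsa
          have e6 := Ne.symm hb
          simp [List.nodup_cons]; tauto)
      have hu0 : u i0 = a := hu (i0, a) (by simp)
      have hu1 : u i1 = s a := hu (i1, s a) (by simp)
      have hu2 : u i2 = b := hu (i2, b) (by simp)
      have hu3 : u i3 = s b := hu (i3, s b) (by simp)
      refine ⟨u⁻¹ * s * u, ⟨u, rfl⟩, ?_, Or.inr (Or.inr ?_)⟩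
      · show u⁻¹ (s (u i0)) = i1
        rw [hu0, ← hu1, Equiv.Perm.inv_def, Equiv.symm_apply_apply]
      · show u⁻¹ (s (u i2)) = i3
        rw [hu2, ← hu3, Equiv.Perm.inv_def, Equiv.symm_apply_apply]

/-! ### The key commutator and its truncated Burau invariant -/

/-- The commutator `⁅σ₁², σ₂²⁆` as a 3×3 truncated Burau unit. -/
def W0 : (Matrix (Fin 3) (Fin 3) Tr)ˣ := ⁅bA3 * bA3, bB3 * bB3⁆

/-- The commutator `⁅σ₁², σ₂²⁆ = ⁅A_{1,2}, A_{2,3}⁆` in the braid group. -/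
def gz (n : ℕ) (hn : 4 ≤ n) : B n :=
  ⁅(PresentedGroup.of (⟨0, by omega⟩ : Fin (n - 1)) : B n) ^ 2,
   (PresentedGroup.of (⟨1, by omega⟩ : Fin (n - 1)) : B n) ^ 2⁆

lemma sq_mem_P (n : ℕ) (i : Fin (n - 1)) :
    (PresentedGroup.of i : B n) ^ 2 ∈ P n := by
  show braidπ n _ = 1
  rw [map_pow, braidπ_of]
  show permGen n i * permGen n i = 1
  exact Equiv.swap_mul_self _ _

lemma gz_mem_gamma2 (n : ℕ) (hn : 4 ≤ n) : gz n hn ∈ gammaB n 2 := by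
  set x : B n := (PresentedGroup.of (⟨0, by omega⟩ : Fin (n - 1)) : B n) ^ 2 with hx
  set y : B n := (PresentedGroup.of (⟨1, by omega⟩ : Fin (n - 1)) : B n) ^ 2 with hy
  have hxP : x ∈ P n := sq_mem_P n _
  have hyP : y ∈ P n := sq_mem_P n _
  refine ⟨⁅(⟨x, hxP⟩ : P n), (⟨y, hyP⟩ : P n)⁆, ?_, ?_⟩
  · exact Subgroup.commutator_mem_commutator (Subgroup.mem_top _) (Subgroup.mem_top _)
  · rw [map_commutatorElement]
    rfl

lemma theta_of_zero (n : ℕ) (hn : 4 ≤ n) :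
    Θ n (PresentedGroup.of (⟨0, by omega⟩ : Fin (n - 1))) =
      Units.map (embHom (embAt 0 3 (by omega))) bA3 := by
  rw [Θ_of]
  show Units.map (embHom (embAt ((⟨0, by omega⟩ : Fin (n - 1)) : ℕ) 2 _)) burU = _
  have h : embAt ((⟨0, by omega⟩ : Fin (n - 1)) : ℕ) 2
      (by have := (⟨0, by omega⟩ : Fin (n - 1)).isLt; omega)
      = (embAt 0 2 (by omega) : Fin 2 ↪ Fin 3).trans (embAt 0 3 (by omega : 0 + 3 ≤ n)) :=
    (embAt_trans 0 0 2 0 (by omega) (by omega) (by omega) (by omega)).symm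
  rw [h, units_emb_trans]
  rfl

lemma theta_of_one (n : ℕ) (hn : 4 ≤ n) :
    Θ n (PresentedGroup.of (⟨1, by omega⟩ : Fin (n - 1))) =
      Units.map (embHom (embAt 0 3 (by omega))) bB3 := by
  rw [Θ_of]
  show Units.map (embHom (embAt ((⟨1, by omega⟩ : Fin (n - 1)) : ℕ) 2 _)) burU = _
  have h : embAt ((⟨1, by omega⟩ : Fin (n - 1)) : ℕ) 2
      (by have := (⟨1, by omega⟩ : Fin (n - 1)).isLt; omega)
      = (embAt 1 2 (by omega) : Fin 2 ↪ Fin 3).trans (embAt 0 3 (by omega : 0 + 3 ≤ n)) :=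
    (embAt_trans 0 1 2 1 (by omega) (by omega) (by omega) (by omega)).symm
  rw [h, units_emb_trans]
  rfl

lemma theta_gz (n : ℕ) (hn : 4 ≤ n) :
    Θ n (gz n hn) = Units.map (embHom (embAt 0 3 (by omega))) W0 := by
  rw [gz, map_commutatorElement, map_pow, map_pow, theta_of_zero n hn, theta_of_one n hn]
  rw [W0, map_commutatorElement, map_mul, map_mul, sq, sq]

lemma gz_entry (n : ℕ) (hn : 4 ≤ n) (a b : Fin 3) :
    cc2 ((Θ n (gz n hn)).val) ⟨(a : ℕ), by have := a.isLt; omega⟩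
      ⟨(b : ℕ), by have := b.isLt; omega⟩ = (W0.val a b).c := by
  rw [theta_gz]
  show (emb (embAt 0 3 (by omega)) W0.val _ _).c = _
  have ha : (⟨(a : ℕ), by have := a.isLt; omega⟩ : Fin n)
      = embAt 0 3 (by omega : 0 + 3 ≤ n) a := Fin.ext (by simp)
  have hb : (⟨(b : ℕ), by have := b.isLt; omega⟩ : Fin n)
      = embAt 0 3 (by omega : 0 + 3 ≤ n) b := Fin.ext (by simp)
  rw [ha, hb, emb_apply_of_of]

lemma gz_entry13 (n : ℕ) (hn : 4 ≤ n) :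
    cc2 ((Θ n (gz n hn)).val) ⟨1, by omega⟩ ⟨3, by omega⟩ = 0 := by
  rw [theta_gz]
  show (emb (embAt 0 3 (by omega)) W0.val _ _).c = 0
  rw [emb_apply_not_right (embAt 0 3 (by omega)) W0.val ?_ ?_]
  · rfl
  · rintro ⟨b, hb⟩
    have := congrArg Fin.val hb
    simp only [embAt_apply] at this
    have := b.isLt
    omega
  · simp [Fin.ext_iff]

lemma W0_val12 : (W0.val 1 2).c = -1 := by decide
lemma W0_val02 : (W0.val 0 2).c = 1 := by decide
lemma W0_val01 : (W0.val 0 1).c = -1 := by decide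

end BraidProj


set_option maxHeartbeats 1000000 in
open scoped commutatorElement in
open BraidProj in
/-- For `n ≥ 4` and `α ∈ B_n`: `α` is a pure braid if and only if `α`
commutes with every element of `Γ_2(P_n)` modulo `Γ_3(P_n)`; i.e. the action
of `B_n/Γ_3(P_n)` on `Γ_2(P_n)/Γ_3(P_n)` factors through a faithful action
of `S_n`. -/
theorem pure_iff_commutes_mod_gamma3 (n : ℕ) (hn : 4 ≤ n) (α : B n) :
    α ∈ P n ↔ ∀ g ∈ gammaB n 2, ⁅α, g⁆ ∈ gammaB n 3 := by
  constructor
  · intro hα g hg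
    exact commutator_mem_gamma3 hα hg
  · intro hcomm
    by_contra hα
    have hs : braidπ n α ≠ 1 := fun h => hα (MonoidHom.mem_ker.mpr h)
    obtain ⟨t, ⟨u, htu⟩, ht0, htc⟩ := exists_conj_witness hn (braidπ n α) hs
    obtain ⟨γ, hγ⟩ := braidπ_surjective n u
    set g0 : B n := gz n hn with hg0
    set g : B n := γ * g0 * γ⁻¹ with hgdef
    have hg2 : g ∈ gammaB n 2 := (gammaB_normal n 2).conj_mem g0 (gz_mem_gamma2 n hn) γ
    have h3 := hcomm g hg2
    have hΘ1 : Θ n ⁅α, g⁆ = 1 := theta_gamma3 h3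
    have hconj : Θ n (α * g * α⁻¹) = Θ n g := by
      have h4 : α * g * α⁻¹ = ⁅α, g⁆ * g := by group
      rw [h4, map_mul, hΘ1, one_mul]
    have hW : Θ n g0 ∈ Wsub n := theta_gamma2 (gz_mem_gamma2 n hn)
    have hx0 : cc0 ((Θ n g0).val) = 1 := hW.1
    have hx1 : cc1 ((Θ n g0).val) = 0 := hW.2
    set C : Matrix (Fin n) (Fin n) ℤ := cc2 ((Θ n g0).val) with hC
    have key : ∀ β : B n, cc2 ((Θ n (β * g0 * β⁻¹)).val)
        = PM (braidπ n β) * C * PM ((braidπ n β)⁻¹) := by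
      intro β
      rw [map_mul, map_mul, map_inv]
      rw [K3 (Θ n β) (Θ n g0) hx0 hx1]
      rw [cc0_Θ, ← map_inv, cc0_Θ, map_inv]
    have hL : α * g * α⁻¹ = (α * γ) * g0 * (α * γ)⁻¹ := by
      rw [hgdef]; group
    have hEq : PM (braidπ n (α * γ)) * C * PM ((braidπ n (α * γ))⁻¹)
        = PM (braidπ n γ) * C * PM ((braidπ n γ)⁻¹) := by
      rw [← key (α * γ), ← key γ, ← hL]
      exact congrArg (fun z => cc2 z.val) hconj
    have hms : braidπ n (α * γ) = braidπ n α * u := by rw [map_mul, hγ]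
    rw [hms, hγ] at hEq
    have hfin : PM t * C * PM t⁻¹ = C := by
      have h5 := congrArg (fun M => PM u⁻¹ * M * PM u) hEq
      have huu : PM u⁻¹ * PM u = (1 : Matrix (Fin n) (Fin n) ℤ) := by
        rw [← PM_mul, inv_mul_cancel, PM_one]
      calc PM t * C * PM t⁻¹
          = PM u⁻¹ * (PM (braidπ n α * u) * C * PM ((braidπ n α * u)⁻¹)) * PM u := by
            rw [htu, show (u⁻¹ * braidπ n α * u)⁻¹ = u⁻¹ * (braidπ n α)⁻¹ * u by group,
              show (braidπ n α * u)⁻¹ = u⁻¹ * (braidπ n α)⁻¹ by group]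
            simp only [PM_mul, mul_assoc]
        _ = PM u⁻¹ * (PM u * C * PM u⁻¹) * PM u := h5
        _ = C := by
            rw [show (PM u⁻¹ * (PM u * C * PM u⁻¹) * PM u : Matrix (Fin n) (Fin n) ℤ)
              = (PM u⁻¹ * PM u) * (C * (PM u⁻¹ * PM u)) by simp only [mul_assoc],
              huu, one_mul, mul_one]
    have hentry : ∀ k l, C k l = C (t k) (t l) := by
      intro k l
      have h6 := congrFun (congrFun hfin (t k)) (t l)
      have h7 : (PM t * C * PM t⁻¹) (t k) (t l) = C k l := by
        rw [mul_PM_apply, PM_mul_apply]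
        simp
      rw [h7] at h6
      exact h6
    set i0 : Fin n := ⟨0, by omega⟩
    set i1 : Fin n := ⟨1, by omega⟩
    set i2 : Fin n := ⟨2, by omega⟩
    set i3 : Fin n := ⟨3, by omega⟩
    have e02 : C i0 i2 = 1 := by
      have := gz_entry n hn 0 2
      rw [show ((W0.val 0 2).c) = 1 from W0_val02] at this
      exact this
    have e12 : C i1 i2 = -1 := by
      have := gz_entry n hn 1 2
      rw [show ((W0.val 1 2).c) = -1 from W0_val12] at this
      exact this
    have e01 : C i0 i1 = -1 := by
      have := gz_entry n hn 0 1
      rw [show ((W0.val 0 1).c) = -1 from W0_val01] at this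
      exact this
    have e13 : C i1 i3 = 0 := gz_entry13 n hn
    rcases htc with h | h | h
    · have h8 := hentry i0 i2
      rw [ht0, h, e02, e12] at h8
      omega
    · have h8 := hentry i0 i1
      rw [ht0, h, e01, e13] at h8
      omega
    · have h8 := hentry i0 i2
      rw [ht0, h, e02, e13] at h8
      omega
end
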